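/- arXiv:1512.02279 — 2 statements merged into one kernel-verified Lean document; each statement's English description precedes it below -/
import Mathlib

section
/- Let p'(n,r) denote the number of projections in D_r(M_n) that have no unnested singleton block. Then p'(0,0) = 1, p'(n,r) = 0 if r < 0 or r > n, and for all n ≥ 1 and 0 ≤ r ≤ n, p'(n,r) = p'(n−1,r−1) + Σ_{j=r+1}^{n−1} p'(n−1,j), where terms with out-of-range indices are 0. -/
/-!
Partial Brauer diagrams on `n` points are formalized as set partitions
(equivalence relations, i.e. `Setoid`s) of the vertex set
`{1,…,n} ∪ {1',…,n'}`, encoded as `Fin n ⊕ Fin n`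
(`Sum.inl i` is the upper vertex `i`, `Sum.inr i` is the lower vertex `i'`),
all of whose blocks have size at most 2.  The product of two diagrams is
defined via connectivity (paths) in the product graph, and the involution `*`
by interchanging the two rows of vertices.
-/

noncomputable section

open scoped Classical

/-- Vertices of a diagram on `n` points. -/
abbrev PBV (n : ℕ) := Fin n ⊕ Fin n

/-- A "diagram candidate": an arbitrary set partition of the vertices. -/
abbrev Dgm (n : ℕ) := Setoid (PBV n)

/-- The equivalence relation ("joined by a path") generated by a relation. -/
inductive RGen {V : Type*} (r : V → V → Prop) : V → V → Prop
  | rel {x y : V} : r x y → RGen r x y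
  | refl (x : V) : RGen r x x
  | symm {x y : V} : RGen r x y → RGen r y x
  | trans {x y z : V} : RGen r x y → RGen r y z → RGen r x z

namespace Dgm

variable {n : ℕ}

/-- Vertices of the product graph: top, middle and bottom rows. -/
abbrev V3 (n : ℕ) := Fin n ⊕ (Fin n ⊕ Fin n)

/-- The first factor occupies the top and middle rows of the product graph. -/
def topMid : PBV n → V3 n
  | Sum.inl i => Sum.inl i
  | Sum.inr i => Sum.inr (Sum.inl i)

/-- The second factor occupies the middle and bottom rows of the product graph. -/
def midBot : PBV n → V3 n
  | Sum.inl i => Sum.inr (Sum.inl i)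
  | Sum.inr i => Sum.inr (Sum.inr i)

/-- The product diagram occupies the top and bottom rows of the product graph. -/
def topBot : PBV n → V3 n
  | Sum.inl i => Sum.inl i
  | Sum.inr i => Sum.inr (Sum.inr i)

/-- The edges of the product graph `Γ(α, β)`. -/
def prodEdges (α β : Dgm n) (x y : V3 n) : Prop :=
  (∃ a b : PBV n, α.r a b ∧ x = topMid a ∧ y = topMid b) ∨
  (∃ a b : PBV n, β.r a b ∧ x = midBot a ∧ y = midBot b)

/-- The product of two diagrams: two vertices lie in the same block of `α β`
iff they are joined by a path in the product graph `Γ(α, β)`. -/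
def pmul (α β : Dgm n) : Dgm n where
  r x y := RGen (prodEdges α β) (topBot x) (topBot y)
  iseqv := ⟨fun _ => RGen.refl _, fun h => h.symm, fun h₁ h₂ => h₁.trans h₂⟩

/-- Interchanging the upper and the lower vertices. -/
def swapUD : PBV n → PBV n
  | Sum.inl i => Sum.inr i
  | Sum.inr i => Sum.inl i

/-- The involution `α ↦ α*` (reflection in a horizontal axis). -/
def pstar (α : Dgm n) : Dgm n := Setoid.comap swapUD α

/-- All blocks of `α` have size at most 2. -/
def IsPB (α : Dgm n) : Prop :=
  ∀ x y z : PBV n, α.r x y → α.r x z → x = y ∨ x = z ∨ y = z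

/-- The partial Brauer monoid `PB_n` (as a set of diagrams). -/
def PBset (n : ℕ) : Set (Dgm n) := {α | IsPB α}

/-- The position of a vertex in the linear order `1 < 2 < ⋯ < n < n' < ⋯ < 1'`. -/
def vpos : PBV n → ℕ
  | Sum.inl i => (i : ℕ)
  | Sum.inr i => 2 * n - 1 - (i : ℕ)

/-- Planarity: no two blocks cross in the order `1 < ⋯ < n < n' < ⋯ < 1'`. -/
def IsPlanar (α : Dgm n) : Prop :=
  ∀ a b c d : PBV n, α.r a b → α.r c d →
    vpos a < vpos c → vpos c < vpos b → vpos b < vpos d → False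

/-- The Motzkin monoid `M_n` (as a set of diagrams). -/
def Mset (n : ℕ) : Set (Dgm n) := {α | IsPB α ∧ IsPlanar α}

/-- The domain of `α`: upper points lying in a transversal block. -/
def domSet (α : Dgm n) : Set (Fin n) := {i | ∃ j, α.r (Sum.inl i) (Sum.inr j)}

/-- The codomain of `α`: lower points lying in a transversal block. -/
def codomSet (α : Dgm n) : Set (Fin n) := {i | ∃ j, α.r (Sum.inr i) (Sum.inl j)}

/-- The rank of a diagram: the number of its transversal blocks (for a diagram
with blocks of size at most 2, each transversal block contains exactly one
upper point, so this is the size of the domain). -/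
def prank (α : Dgm n) : ℕ := (domSet α).ncard

/-- `α` is an idempotent. -/
def IsIdpt (α : Dgm n) : Prop := pmul α α = α

/-- `α` is a projection. -/
def IsProj (α : Dgm n) : Prop := pmul α α = α ∧ pstar α = α

/-- The D-class `D_r(PB_n)`. -/
def DPB (n r : ℕ) : Set (Dgm n) := {α | α ∈ PBset n ∧ prank α = r}

/-- The ideal `I_r(PB_n)`. -/
def IPB (n r : ℕ) : Set (Dgm n) := {α | α ∈ PBset n ∧ prank α ≤ r}

/-- The D-class `D_r(M_n)`. -/
def DM (n r : ℕ) : Set (Dgm n) := {α | α ∈ Mset n ∧ prank α = r}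

/-- The ideal `I_r(M_n)`. -/
def IM (n r : ℕ) : Set (Dgm n) := {α | α ∈ Mset n ∧ prank α ≤ r}

end Dgm

/-- Membership in the closure of a subset under a binary operation. -/
inductive MClo {γ : Type*} (m : γ → γ → γ) (X : Set γ) : γ → Prop
  | base {x : γ} : x ∈ X → MClo m X x
  | mul {x y : γ} : MClo m X x → MClo m X y → MClo m X (m x y)

/-- The subsemigroup `⟨X⟩` generated by the subset `X`. -/
def genSet {γ : Type*} (m : γ → γ → γ) (X : Set γ) : Set γ := {x | MClo m X x}

/-- The rank of `T`: the least size of a generating set. -/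
noncomputable def rnk {γ : Type*} (m : γ → γ → γ) (T : Set γ) : ℕ :=
  sInf {k | ∃ X : Finset γ, X.card = k ∧ genSet m ↑X = T}

/-- The idempotent rank of `T`: the least size of a generating set consisting
of idempotents. -/
noncomputable def idrnk {γ : Type*} (m : γ → γ → γ) (T : Set γ) : ℕ :=
  sInf {k | ∃ X : Finset γ, X.card = k ∧ (∀ x ∈ X, m x x = x) ∧ genSet m ↑X = T}

/-- `T` is idempotent-generated. -/
def IdptGen {γ : Type*} (m : γ → γ → γ) (T : Set γ) : Prop :=
  genSet m {x ∈ T | m x x = x} = T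

open Dgm
/-- `a(m)`: `a(0) = a(1) = 1` and `a(m) = a(m-1) + (m-1)·a(m-2)`. -/
def aSeq : ℕ → ℕ
  | 0 => 1
  | 1 => 1
  | (m + 2) => aSeq (m + 1) + (m + 1) * aSeq m

/-- The double factorial `k!!`, with the convention `k!! = 0` for even `k ≥ 0`. -/
def oddDF : ℕ → ℕ
  | 0 => 0
  | 1 => 1
  | (k + 2) => (k + 2) * oddDF k

namespace Dgm

variable {n : ℕ}

/-- `{x}` is a singleton upper block of `α`. -/
def UpperSingleton (α : Dgm n) (x : Fin n) : Prop :=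
  ∀ y : PBV n, α.r (Sum.inl x) y → y = Sum.inl x

/-- `{x'}` is a singleton lower block of `α`. -/
def LowerSingleton (α : Dgm n) (x : Fin n) : Prop :=
  ∀ y : PBV n, α.r (Sum.inr x) y → y = Sum.inr x

/-- The upper point `x` is nested: some upper block `{u,v}` has `u < x < v`. -/
def UpperNested (α : Dgm n) (x : Fin n) : Prop :=
  ∃ u v : Fin n, α.r (Sum.inl u) (Sum.inl v) ∧ u < x ∧ x < v

/-- The lower point `x'` is nested: some lower block `{u',v'}` has `u < x < v`. -/
def LowerNested (α : Dgm n) (x : Fin n) : Prop :=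
  ∃ u v : Fin n, α.r (Sum.inr u) (Sum.inr v) ∧ u < x ∧ x < v

/-- `α` has no unnested singleton (upper or lower) block. -/
def NoUnnestedSingleton (α : Dgm n) : Prop :=
  (∀ x, UpperSingleton α x → UpperNested α x) ∧
  (∀ x, LowerSingleton α x → LowerNested α x)

/-- A chain of `d` nested upper hooks of `α` around the upper point `x`:
`u_{d-1} < ⋯ < u_0 < x < v_0 < ⋯ < v_{d-1}` with each `{u_i, v_i}` a block.
The singleton upper block `{x}` has nesting depth at most `k` iff there is no
such chain of length `k + 1`. -/
def UpperHookChain (α : Dgm n) (x : Fin n) (d : ℕ) : Prop :=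
  ∃ u v : Fin d → Fin n,
    (∀ i, α.r (Sum.inl (u i)) (Sum.inl (v i))) ∧
    (∀ i, u i < x ∧ x < v i) ∧ StrictAnti u ∧ StrictMono v

/-- A chain of `d` nested lower hooks of `α` around the lower point `x'`. -/
def LowerHookChain (α : Dgm n) (x : Fin n) (d : ℕ) : Prop :=
  ∃ u v : Fin d → Fin n,
    (∀ i, α.r (Sum.inr (u i)) (Sum.inr (v i))) ∧
    (∀ i, u i < x ∧ x < v i) ∧ StrictAnti u ∧ StrictMono v

/-- `λ_A`: the planar diagram joining the `k`-th smallest element of `A`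
(upper) to `k` (lower), all other blocks being singletons. -/
def lamd (A : Finset (Fin n)) : Dgm n :=
  Setoid.ker (fun x : PBV n =>
    match x with
    | Sum.inl a =>
        if ha : a ∈ A then
          (Sum.inr (((A.orderIsoOfFin rfl).symm ⟨a, ha⟩ : Fin A.card) : ℕ) : ℕ ⊕ ℕ)
        else Sum.inl (a : ℕ)
    | Sum.inr j => Sum.inr (j : ℕ))

/-- `ρ_A = (λ_A)*`. -/
def rhod (A : Finset (Fin n)) : Dgm n := pstar (lamd A)

/-- The diagram whose 2-element blocks are exactly `{i, (π i)'}` for `i < r`. -/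
def permDgm (n r : ℕ) (π : Equiv.Perm (Fin r)) : Dgm n :=
  Setoid.ker (fun x : PBV n =>
    match x with
    | Sum.inl a =>
        if h : (a : ℕ) < r then (Sum.inr ((π ⟨(a : ℕ), h⟩ : Fin r) : ℕ) : ℕ ⊕ ℕ)
        else Sum.inl (a : ℕ)
    | Sum.inr j => Sum.inr (j : ℕ))

/-- The set `S_{[r]} ⊆ PB_n`. -/
def SBr (n r : ℕ) : Set (Dgm n) := {γ | ∃ π : Equiv.Perm (Fin r), γ = permDgm n r π}

/-- The domain of `α` as a `Finset`. -/
def domFinset (α : Dgm n) : Finset (Fin n) :=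
  Finset.univ.filter fun i => i ∈ domSet α

/-- The codomain of `α` as a `Finset`. -/
def codomFinset (α : Dgm n) : Finset (Fin n) :=
  Finset.univ.filter fun i => i ∈ codomSet α

/-- `A ⊆ {1,…,n}` is cosparse: its complement contains no two consecutive
elements. -/
def CosparseS (A : Set (Fin n)) : Prop :=
  ∀ i j : Fin n, i ∉ A → j ∉ A → (j : ℕ) ≠ (i : ℕ) + 1

/-- `id_A`: the diagram with blocks `{a, a'}` for `a ∈ A`, all other blocks
being singletons. -/
def idd (A : Set (Fin n)) : Dgm n :=
  Setoid.ker (fun x : PBV n =>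
    match x with
    | Sum.inl a => if a ∈ A then (Sum.inr (a : ℕ) : ℕ ⊕ ℕ) else Sum.inl (a : ℕ)
    | Sum.inr j => Sum.inr (j : ℕ))

end Dgm

/-- `p'(n,r)`: the number of projections in `D_r(M_n)` with no unnested
singleton block. -/
noncomputable def pM' (n r : ℕ) : ℕ :=
  Set.ncard {α : Dgm n | α ∈ Dgm.DM n r ∧ Dgm.IsProj α ∧ Dgm.NoUnnestedSingleton α}

namespace PMAux

open Dgm Finset

variable {n : ℕ}

/-- Letter data of a pattern: `inl j` = hook partner `j`, `inr true` = vertical,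
`inr false` = singleton. -/
abbrev T (n : ℕ) := Fin n → Fin n ⊕ Bool

def Good (t : T n) : Prop :=
  (∀ i j, t i = .inl j → j ≠ i) ∧
  (∀ i j, t i = .inl j → t j = .inl i) ∧
  (∀ i j k l, t i = .inl j → t k = .inl l → i < k → k < j → j < l → False) ∧
  (∀ i j k, t i = .inl j → i < k → k < j → t k ≠ .inr true) ∧
  (∀ k, t k = .inr false → ∃ i j, t i = .inl j ∧ i < k ∧ k < j)

def rankT (t : T n) : ℕ := (Finset.univ.filter fun i => t i = Sum.inr true).card

def PatR (n r : ℕ) := {t : T n // Good t ∧ rankT t = r}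

/-- The relation of the diagram associated to a pattern. -/
def prel (t : T n) : PBV n → PBV n → Prop
  | Sum.inl i, Sum.inl j => i = j ∨ t i = .inl j
  | Sum.inl i, Sum.inr j => i = j ∧ t i = .inr true
  | Sum.inr i, Sum.inl j => i = j ∧ t i = .inr true
  | Sum.inr i, Sum.inr j => i = j ∨ t i = .inl j

lemma prel_refl (t : T n) : ∀ x, prel t x x := by
  intro x; cases x <;> exact Or.inl rfl

lemma prel_symm {t : T n} (h : Good t) : ∀ {x y}, prel t x y → prel t y x := by
  intro x y hxy
  cases x <;> cases y <;> simp only [prel] at *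
  · rcases hxy with rfl | hxy
    · exact Or.inl rfl
    · exact Or.inr (h.2.1 _ _ hxy)
  · exact ⟨hxy.1.symm, hxy.1 ▸ hxy.2⟩
  · exact ⟨hxy.1.symm, hxy.1 ▸ hxy.2⟩
  · rcases hxy with rfl | hxy
    · exact Or.inl rfl
    · exact Or.inr (h.2.1 _ _ hxy)

lemma prel_trans {t : T n} (h : Good t) : ∀ {x y z}, prel t x y → prel t y z → prel t x z := by
  intro x y z hxy hyz
  cases x <;> cases y <;> cases z <;> simp only [prel] at *
  case inl.inl.inl i j k =>
    rcases hxy with rfl | hxy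
    · exact hyz
    rcases hyz with rfl | hyz
    · exact Or.inr hxy
    · have := h.2.1 _ _ hxy
      rw [this] at hyz; exact Or.inl (Sum.inl.inj hyz)
  case inl.inl.inr i j k =>
    rcases hxy with rfl | hxy
    · exact hyz
    · exact absurd hyz.2 (by rw [h.2.1 _ _ hxy]; simp)
  case inl.inr.inl i j k =>
    rcases hyz with ⟨rfl, h2⟩
    rcases hxy with ⟨rfl, h1⟩
    exact Or.inl rfl
  case inl.inr.inr i j k =>
    rcases hxy with ⟨rfl, h1⟩
    rcases hyz with rfl | hyz
    · exact ⟨rfl, h1⟩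
    · rw [h1] at hyz; exact absurd hyz (by simp)
  case inr.inl.inl i j k =>
    rcases hxy with ⟨rfl, h1⟩
    rcases hyz with rfl | hyz
    · exact ⟨rfl, h1⟩
    · rw [h1] at hyz; exact absurd hyz (by simp)
  case inr.inl.inr i j k =>
    rcases hxy with ⟨rfl, h1⟩
    rcases hyz with ⟨rfl, h2⟩
    exact Or.inl rfl
  case inr.inr.inl i j k =>
    rcases hxy with rfl | hxy
    · exact hyz
    · rw [h.2.1 _ _ hxy] at hyz
      exact absurd hyz.2 (by simp)
  case inr.inr.inr i j k =>
    rcases hxy with rfl | hxy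
    · exact hyz
    rcases hyz with rfl | hyz
    · exact Or.inr hxy
    · have := h.2.1 _ _ hxy
      rw [this] at hyz; exact Or.inl (Sum.inl.inj hyz)

def toDgm (t : T n) (h : Good t) : Dgm n where
  r := prel t
  iseqv := ⟨prel_refl t, prel_symm h, prel_trans h⟩

lemma toDgm_r (t : T n) (h : Good t) (x y : PBV n) : (toDgm t h).r x y ↔ prel t x y := Iff.rfl

lemma toDgm_isPB (t : T n) (h : Good t) : IsPB (toDgm t h) := by
  intro x y z hxy hxz
  cases x <;> cases y <;> cases z <;>
    simp only [toDgm_r, prel] at hxy hxz <;>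
    simp only [Sum.inl.injEq, Sum.inr.injEq]
  case inl.inl.inl i j k =>
    rcases hxy with rfl | hxy
    · exact Or.inl rfl
    rcases hxz with rfl | hxz
    · exact Or.inr (Or.inl rfl)
    · rw [hxy] at hxz; exact Or.inr (Or.inr (Sum.inl.inj hxz))
  case inl.inl.inr i j k =>
    rcases hxz with ⟨rfl, h2⟩
    rcases hxy with rfl | hxy
    · exact Or.inl rfl
    · rw [hxy] at h2; exact absurd h2 (by simp)
  case inl.inr.inl i j k =>
    rcases hxy with ⟨rfl, h1⟩
    rcases hxz with rfl | hxz
    · exact Or.inr (Or.inl rfl)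
    · rw [hxz] at h1; exact absurd h1 (by simp)
  case inl.inr.inr i j k =>
    rcases hxy with ⟨rfl, h1⟩
    rcases hxz with ⟨rfl, h2⟩
    exact Or.inr (Or.inr rfl)
  case inr.inl.inl i j k =>
    rcases hxy with ⟨rfl, h1⟩
    rcases hxz with ⟨rfl, h2⟩
    exact Or.inr (Or.inr rfl)
  case inr.inl.inr i j k =>
    rcases hxy with ⟨rfl, h1⟩
    rcases hxz with rfl | hxz
    · exact Or.inr (Or.inl rfl)
    · rw [hxz] at h1; exact absurd h1 (by simp)
  case inr.inr.inl i j k =>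
    rcases hxz with ⟨rfl, h2⟩
    rcases hxy with rfl | hxy
    · exact Or.inl rfl
    · rw [hxy] at h2; exact absurd h2 (by simp)
  case inr.inr.inr i j k =>
    rcases hxy with rfl | hxy
    · exact Or.inl rfl
    rcases hxz with rfl | hxz
    · exact Or.inr (Or.inl rfl)
    · rw [hxy] at hxz; exact Or.inr (Or.inr (Sum.inl.inj hxz))

lemma swapUD_swapUD (x : PBV n) : swapUD (swapUD x) = x := by cases x <;> rfl

/-- collapse the middle row onto the top row -/
def pi3 : V3 n → PBV n
  | .inl i => .inl i
  | .inr (.inl i) => .inl i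
  | .inr (.inr i) => .inr i

lemma pmul_self (α : Dgm n)
    (hsym : ∀ x y, α.r x y → α.r (swapUD x) (swapUD y))
    (hvert : ∀ i j, α.r (.inl i) (.inr j) → i = j) :
    pmul α α = α := by
  apply Setoid.ext; intro x y
  constructor
  · intro hxy
    have key : ∀ u v : V3 n, RGen (prodEdges α α) u v → α.r (pi3 u) (pi3 v) := by
      intro u v huv
      induction huv with
      | @rel x y hr =>
          rcases hr with ⟨a, b, hab, rfl, rfl⟩ | ⟨a, b, hab, rfl, rfl⟩
          · match a, b, hab with
            | .inl i, .inl j, hab => exact hab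
            | .inl i, .inr j, hab =>
                have := hvert _ _ hab; subst this; exact α.iseqv.refl _
            | .inr i, .inl j, hab =>
                have := hvert _ _ (α.iseqv.symm hab); subst this; exact α.iseqv.refl _
            | .inr i, .inr j, hab => exact hsym _ _ hab
          · match a, b, hab with
            | .inl i, .inl j, hab => exact hab
            | .inl i, .inr j, hab => exact hab
            | .inr i, .inl j, hab => exact hab
            | .inr i, .inr j, hab => exact hab
      | refl u => exact α.iseqv.refl _
      | symm _ ih => exact α.iseqv.symm ih
      | trans _ _ ih1 ih2 => exact α.iseqv.trans ih1 ih2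
    have h2 := key _ _ hxy
    match x, y, h2 with
    | .inl i, .inl j, h2 => exact h2
    | .inl i, .inr j, h2 => exact h2
    | .inr i, .inl j, h2 => exact h2
    | .inr i, .inr j, h2 => exact h2
  · intro hxy
    match x, y, hxy with
    | .inl i, .inl j, hxy => exact RGen.rel (Or.inl ⟨.inl i, .inl j, hxy, rfl, rfl⟩)
    | .inr i, .inr j, hxy => exact RGen.rel (Or.inr ⟨.inr i, .inr j, hxy, rfl, rfl⟩)
    | .inl i, .inr j, hxy =>
        have hh := hvert _ _ hxy; subst hh
        exact RGen.trans (RGen.rel (Or.inl ⟨.inl i, .inr i, hxy, rfl, rfl⟩))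
          (RGen.rel (Or.inr ⟨.inl i, .inr i, hxy, rfl, rfl⟩))
    | .inr i, .inl j, hxy =>
        have hyx : α.r (.inl j) (.inr i) := α.iseqv.symm hxy
        have hh := hvert _ _ hyx; subst hh
        exact RGen.symm (RGen.trans (RGen.rel (Or.inl ⟨.inl j, .inr j, hyx, rfl, rfl⟩))
          (RGen.rel (Or.inr ⟨.inl j, .inr j, hyx, rfl, rfl⟩)))

lemma proj_of (α : Dgm n)
    (hsym : ∀ x y, α.r x y → α.r (swapUD x) (swapUD y))
    (hvert : ∀ i j, α.r (.inl i) (.inr j) → i = j) :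
    IsProj α := by
  refine ⟨pmul_self α hsym hvert, ?_⟩
  apply Setoid.ext; intro x y
  show α.r (swapUD x) (swapUD y) ↔ α.r x y
  constructor
  · intro h
    have := hsym _ _ h
    rwa [swapUD_swapUD, swapUD_swapUD] at this
  · exact hsym x y

lemma sym_of_pstar (α : Dgm n) (h : pstar α = α) :
    ∀ x y, α.r x y → α.r (swapUD x) (swapUD y) := by
  intro x y hxy
  have h' : (pstar α).r x y ↔ α.r x y := by rw [h]
  exact h'.2 hxy

lemma vert_of_proj (α : Dgm n) (hPB : IsPB α) (hid : pmul α α = α)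
    (hsym : ∀ x y, α.r x y → α.r (swapUD x) (swapUD y)) :
    ∀ i j, α.r (.inl i) (.inr j) → i = j := by
  intro i j hij
  have h2 : α.r (.inl j) (.inr i) := hsym _ _ (α.iseqv.symm hij)
  have hpath : (pmul α α).r (Sum.inl i) (Sum.inr i) :=
    RGen.trans (RGen.rel (Or.inl ⟨Sum.inl i, Sum.inr j, hij, rfl, rfl⟩))
      (RGen.rel (Or.inr ⟨Sum.inl j, Sum.inr i, h2, rfl, rfl⟩))
  rw [hid] at hpath
  rcases hPB (Sum.inl i) (Sum.inr j) (Sum.inr i) hij hpath with h | h | h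
  · exact absurd h (by simp)
  · exact absurd h (by simp)
  · exact (Sum.inr.injEq _ _ ▸ h).symm

lemma vpos_inl (i : Fin n) : vpos (Sum.inl i : PBV n) = (i : ℕ) := rfl
lemma vpos_inr (i : Fin n) : vpos (Sum.inr i : PBV n) = 2*n-1-(i : ℕ) := rfl

lemma toDgm_planar (t : T n) (h : Good t) : IsPlanar (toDgm t h) := by
  have hn : ∀ m : Fin n, (m : ℕ) < n := fun m => m.isLt
  intro a b c d hab hcd h1 h2 h3
  rw [toDgm_r] at hab hcd
  rcases a with i|i <;> rcases b with j|j <;> rcases c with k|k <;> rcases d with l|l <;>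
    simp only [prel] at hab hcd <;>
    simp only [vpos_inl, vpos_inr] at h1 h2 h3
  · rcases hab with rfl|hab
    · omega
    rcases hcd with rfl|hcd
    · omega
    exact h.2.2.1 i j k l hab hcd h1 h2 h3
  · obtain ⟨rfl, hv⟩ := hcd
    rcases hab with rfl|hab
    · omega
    exact h.2.2.2.1 i j k hab h1 h2 hv
  · have := hn j; have := hn k; omega
  · have := hn j; have := hn k; omega
  · have := hn l; have := hn j; omega
  · obtain ⟨rfl, hv⟩ := hab; obtain ⟨rfl, hv2⟩ := hcd
    have := hn i; have := hn k; omega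
  · have := hn l; have := hn j; omega
  · obtain ⟨rfl, hv⟩ := hab
    rcases hcd with rfl|hcd
    · have := hn i; have := hn k; omega
    · have h4 : (l : ℕ) < (i : ℕ) := by have := hn i; have := hn k; have := hn l; omega
      have h5 : (i : ℕ) < (k : ℕ) := by have := hn i; have := hn k; have := hn l; omega
      exact h.2.2.2.1 l k i (h.2.1 _ _ hcd) h4 h5 hv
  · have := hn i; have := hn k; omega
  · have := hn i; have := hn k; omega
  · have := hn j; have := hn k; omega
  · have := hn j; have := hn k; omega
  · have := hn i; have := hn k; omega
  · have := hn i; have := hn k; omega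
  · have := hn j; have := hn l; omega
  · rcases hab with rfl|hab
    · omega
    rcases hcd with rfl|hcd
    · omega
    have h4 : (l : ℕ) < (j : ℕ) := by have := hn i; have := hn j; have := hn k; have := hn l; omega
    have h5 : (j : ℕ) < (k : ℕ) := by have := hn i; have := hn j; have := hn k; have := hn l; omega
    have h6 : (k : ℕ) < (i : ℕ) := by have := hn i; have := hn j; have := hn k; have := hn l; omega
    exact h.2.2.1 l k j i (h.2.1 _ _ hcd) (h.2.1 _ _ hab) h4 h5 h6

lemma toDgm_prank (t : T n) (h : Good t) : prank (toDgm t h) = rankT t := by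
  have hset : domSet (toDgm t h) = ↑(Finset.univ.filter fun i => t i = Sum.inr true) := by
    ext i
    simp only [domSet, Set.mem_setOf_eq, coe_filter, mem_univ, true_and]
    constructor
    · rintro ⟨j, hj⟩; exact hj.2
    · intro hv; exact ⟨i, rfl, hv⟩
  rw [prank, hset, Set.ncard_coe_finset, rankT]

lemma toDgm_nus (t : T n) (h : Good t) : NoUnnestedSingleton (toDgm t h) := by
  constructor
  · intro x hx
    have hf : t x = Sum.inr false := by
      rcases ht : t x with j | b
      · have := hx (Sum.inl j) (Or.inr ht)
        exact absurd (Sum.inl.inj this) (h.1 _ _ ht)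
      · cases b
        · rfl
        · have := hx (Sum.inr x) ⟨rfl, ht⟩; simp at this
    obtain ⟨i, j, hij, h1, h2⟩ := h.2.2.2.2 x hf
    exact ⟨i, j, Or.inr hij, h1, h2⟩
  · intro x hx
    have hf : t x = Sum.inr false := by
      rcases ht : t x with j | b
      · have := hx (Sum.inr j) (Or.inr ht)
        exact absurd (Sum.inr.inj this) (h.1 _ _ ht)
      · cases b
        · rfl
        · have := hx (Sum.inl x) ⟨rfl, ht⟩; simp at this
    obtain ⟨i, j, hij, h1, h2⟩ := h.2.2.2.2 x hf
    exact ⟨i, j, Or.inr hij, h1, h2⟩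

lemma toDgm_sym (t : T n) (h : Good t) :
    ∀ x y, (toDgm t h).r x y → (toDgm t h).r (swapUD x) (swapUD y) := by
  intro x y hxy; cases x <;> cases y <;> exact hxy

lemma toDgm_vert (t : T n) (h : Good t) :
    ∀ i j, (toDgm t h).r (.inl i) (.inr j) → i = j := fun _ _ hij => hij.1

/-- Extraction of the pattern of a diagram. -/
def exT (α : Dgm n) : T n := fun i =>
  if h : ∃ j, j ≠ i ∧ α.r (.inl i) (.inl j) then Sum.inl h.choose
  else if α.r (.inl i) (.inr i) then Sum.inr true else Sum.inr false

lemma hook_unique (α : Dgm n) (hPB : IsPB α) {i j k : Fin n}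
    (h1 : α.r (.inl i) (.inl j)) (h2 : α.r (.inl i) (.inl k)) (hj : j ≠ i) (hk : k ≠ i) :
    j = k := by
  rcases hPB _ _ _ h1 h2 with h | h | h
  · exact absurd (Sum.inl.inj h).symm hj
  · exact absurd (Sum.inl.inj h).symm hk
  · exact Sum.inl.inj h

lemma hook_not_vert (α : Dgm n) (hPB : IsPB α) {i j k : Fin n}
    (h1 : α.r (.inl i) (.inl j)) (hj : j ≠ i) (h2 : α.r (.inl i) (.inr k)) : False := by
  rcases hPB _ _ _ h1 h2 with h | h | h
  · exact hj (Sum.inl.inj h).symm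
  · simp at h
  · simp at h

lemma exT_inl_iff (α : Dgm n) (hPB : IsPB α) {i j : Fin n} :
    exT α i = .inl j ↔ (j ≠ i ∧ α.r (.inl i) (.inl j)) := by
  unfold exT
  split_ifs with h1 h2
  · constructor
    · intro he
      have hs := h1.choose_spec
      rwa [← Sum.inl.inj he]
    · rintro ⟨hne, hr⟩
      exact congrArg Sum.inl (hook_unique α hPB h1.choose_spec.2 hr h1.choose_spec.1 hne)
  · constructor
    · intro he; exact absurd he (by simp)
    · rintro ⟨hne, hr⟩; exact absurd ⟨j, hne, hr⟩ h1
  · constructor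
    · intro he; exact absurd he (by simp)
    · rintro ⟨hne, hr⟩; exact absurd ⟨j, hne, hr⟩ h1

lemma exT_true_iff (α : Dgm n) (hPB : IsPB α) {i : Fin n} :
    exT α i = .inr true ↔ α.r (.inl i) (.inr i) := by
  unfold exT
  split_ifs with h1 h2
  · constructor
    · intro he; exact absurd he (by simp)
    · intro hr; exact (hook_not_vert α hPB h1.choose_spec.2 h1.choose_spec.1 hr).elim
  · exact iff_of_true rfl h2
  · exact iff_of_false (by simp) h2

lemma exT_false_iff (α : Dgm n) (hPB : IsPB α)
    (hvert : ∀ i j, α.r (.inl i) (.inr j) → i = j) {i : Fin n} :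
    exT α i = .inr false ↔ UpperSingleton α i := by
  unfold exT
  split_ifs with h1 h2
  · refine iff_of_false (by simp) fun hs => ?_
    exact h1.choose_spec.1 (Sum.inl.inj (hs _ h1.choose_spec.2))
  · refine iff_of_false (by simp) fun hs => ?_
    have := hs _ h2; simp at this
  · refine iff_of_true rfl fun y hy => ?_
    rcases y with j | j
    · by_cases he : j = i
      · rw [he]
      · exact absurd ⟨j, he, hy⟩ h1
    · obtain rfl := hvert _ _ hy
      exact absurd hy h2

lemma exT_good (α : Dgm n) (hPB : IsPB α) (hPl : IsPlanar α)
    (hvert : ∀ i j, α.r (.inl i) (.inr j) → i = j)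
    (hnus : NoUnnestedSingleton α) : Good (exT α) := by
  have hn : ∀ m : Fin n, (m : ℕ) < n := fun m => m.isLt
  refine ⟨?_, ?_, ?_, ?_, ?_⟩
  · intro i j hij; exact ((exT_inl_iff α hPB).1 hij).1
  · intro i j hij
    obtain ⟨hne, hr⟩ := (exT_inl_iff α hPB).1 hij
    exact (exT_inl_iff α hPB).2 ⟨Ne.symm hne, α.iseqv.symm hr⟩
  · intro i j k l hij hkl h1 h2 h3
    obtain ⟨_, hr1⟩ := (exT_inl_iff α hPB).1 hij
    obtain ⟨_, hr2⟩ := (exT_inl_iff α hPB).1 hkl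
    exact hPl (.inl i) (.inl j) (.inl k) (.inl l) hr1 hr2 h1 h2 h3
  · intro i j k hij h1 h2 hk
    obtain ⟨_, hr1⟩ := (exT_inl_iff α hPB).1 hij
    have hr2 := (exT_true_iff α hPB).1 hk
    refine hPl (.inl i) (.inl j) (.inl k) (.inr k) hr1 hr2 h1 h2 ?_
    show (j : ℕ) < 2*n-1-(k : ℕ)
    have := hn j; have := hn k; have h3 : (k:ℕ) < (j:ℕ) := h2; omega
  · intro k hk
    have hs := (exT_false_iff α hPB hvert).1 hk
    obtain ⟨u, v, huv, h1, h2⟩ := hnus.1 k hs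
    refine ⟨u, v, (exT_inl_iff α hPB).2 ⟨?_, huv⟩, h1, h2⟩
    intro he; rw [he] at h2; exact absurd (h1.trans h2) (lt_irrefl _)

lemma exT_rank (α : Dgm n) (hPB : IsPB α)
    (hvert : ∀ i j, α.r (.inl i) (.inr j) → i = j) :
    rankT (exT α) = prank α := by
  have hset : domSet α = ↑(Finset.univ.filter fun i => exT α i = Sum.inr true) := by
    ext i
    simp only [domSet, Set.mem_setOf_eq, coe_filter, mem_univ, true_and]
    constructor
    · rintro ⟨j, hj⟩
      obtain rfl := hvert _ _ hj
      exact (exT_true_iff α hPB).2 hj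
    · intro hv; exact ⟨i, (exT_true_iff α hPB).1 hv⟩
  rw [prank, hset, Set.ncard_coe_finset, rankT]

lemma toDgm_exT (α : Dgm n) (hPB : IsPB α)
    (hvert : ∀ i j, α.r (.inl i) (.inr j) → i = j)
    (hsym : ∀ x y, α.r x y → α.r (swapUD x) (swapUD y))
    (hg : Good (exT α)) : toDgm (exT α) hg = α := by
  apply Setoid.ext; intro x y
  rw [toDgm_r]
  rcases x with i|i <;> rcases y with j|j <;> simp only [prel]
  · constructor
    · rintro (rfl | hij)
      · exact α.iseqv.refl _
      · exact ((exT_inl_iff α hPB).1 hij).2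
    · intro hr
      by_cases he : i = j
      · exact Or.inl he
      · exact Or.inr ((exT_inl_iff α hPB).2 ⟨Ne.symm he, hr⟩)
  · constructor
    · rintro ⟨rfl, hv⟩; exact (exT_true_iff α hPB).1 hv
    · intro hr
      obtain rfl := hvert _ _ hr
      exact ⟨rfl, (exT_true_iff α hPB).2 hr⟩
  · constructor
    · rintro ⟨rfl, hv⟩; exact α.iseqv.symm ((exT_true_iff α hPB).1 hv)
    · intro hr
      have hr' := α.iseqv.symm hr
      obtain rfl := hvert _ _ hr'
      exact ⟨rfl, (exT_true_iff α hPB).2 hr'⟩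
  · constructor
    · rintro (rfl | hij)
      · exact α.iseqv.refl _
      · exact hsym _ _ ((exT_inl_iff α hPB).1 hij).2
    · intro hr
      by_cases he : i = j
      · exact Or.inl he
      · exact Or.inr ((exT_inl_iff α hPB).2 ⟨Ne.symm he, hsym _ _ hr⟩)

lemma exT_toDgm (t : T n) (h : Good t) : exT (toDgm t h) = t := by
  have hPB := toDgm_isPB t h
  have hvert : ∀ i j, (toDgm t h).r (.inl i) (.inr j) → i = j := fun _ _ hij => hij.1
  funext i
  rcases ht : t i with j | b
  · exact (exT_inl_iff _ hPB).2 ⟨h.1 _ _ ht, Or.inr ht⟩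
  · cases b
    · refine (exT_false_iff _ hPB hvert).2 ?_
      intro y hy
      rcases y with j | j
      · rcases hy with rfl | hy
        · rfl
        · rw [ht] at hy; exact absurd hy (by simp)
      · obtain ⟨rfl, hv⟩ := hy
        rw [ht] at hv; exact absurd hv (by simp)
    · exact (exT_true_iff _ hPB).2 ⟨rfl, ht⟩

def equivA (n r : ℕ) :
    PatR n r ≃ ({α : Dgm n | α ∈ Dgm.DM n r ∧ Dgm.IsProj α ∧ Dgm.NoUnnestedSingleton α}) where
  toFun p := ⟨toDgm p.1 p.2.1,
    ⟨⟨⟨toDgm_isPB _ _, toDgm_planar _ _⟩, by rw [toDgm_prank]; exact p.2.2⟩,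
      proj_of _ (toDgm_sym _ _) (toDgm_vert _ _), toDgm_nus _ _⟩⟩
  invFun x :=
    have hPB : IsPB x.1 := x.2.1.1.1
    have hPl : IsPlanar x.1 := x.2.1.1.2
    have hsym := sym_of_pstar x.1 x.2.2.1.2
    have hvert := vert_of_proj x.1 hPB x.2.2.1.1 hsym
    ⟨exT x.1, exT_good x.1 hPB hPl hvert x.2.2.2,
      by rw [exT_rank x.1 hPB hvert]; exact x.2.1.2⟩
  left_inv p := Subtype.ext (exT_toDgm p.1 p.2.1)
  right_inv x :=
    have hPB : IsPB x.1 := x.2.1.1.1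
    have hPl : IsPlanar x.1 := x.2.1.1.2
    have hsym := sym_of_pstar x.1 x.2.2.1.2
    have hvert := vert_of_proj x.1 hPB x.2.2.1.1 hsym
    Subtype.ext (toDgm_exT x.1 hPB hvert hsym (exT_good x.1 hPB hPl hvert x.2.2.2))

lemma pM'_eq_card (n r : ℕ) : pM' n r = Nat.card (PatR n r) := by
  rw [pM', ← Nat.card_coe_set_eq]
  exact (Nat.card_congr (equivA n r)).symm

/-! ### Part B: the recurrence on patterns -/

section PartB

variable {m : ℕ}

lemma rank_split (t : T (m+1)) :
    rankT t = (Finset.univ.filter fun k : Fin m => t k.castSucc = Sum.inr true).card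
      + (if t (Fin.last m) = Sum.inr true then 1 else 0) := by
  rw [rankT, Finset.card_filter, Fin.sum_univ_castSucc, Finset.card_filter]

def cU : Fin m ⊕ Bool → Fin (m+1) ⊕ Bool
  | .inl j => .inl j.castSucc
  | .inr b => .inr b

def cD : Fin (m+1) ⊕ Bool → Fin m ⊕ Bool
  | .inl j => if h : (j : ℕ) < m then .inl ⟨j, h⟩ else .inr true
  | .inr b => .inr b

lemma cD_cU (x : Fin m ⊕ Bool) : cD (cU x) = x := by
  rcases x with j | b
  · simp [cU, cD, j.isLt, Fin.ext_iff]
  · rfl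

lemma cU_inl {x : Fin m ⊕ Bool} {j : Fin (m+1)} :
    cU x = .inl j ↔ ∃ j' : Fin m, x = .inl j' ∧ j = j'.castSucc := by
  rcases x with j' | b
  · simp [cU, eq_comm]
  · simp [cU]

lemma cU_inr {x : Fin m ⊕ Bool} {b : Bool} : cU x = .inr b ↔ x = .inr b := by
  rcases x with j' | b' <;> simp [cU]

/-- Append a vertical edge at the last position. -/
def addVert (t : T m) : T (m+1) :=
  Fin.lastCases (Sum.inr true) (fun k => cU (t k))

lemma addVert_last (t : T m) : addVert t (Fin.last m) = Sum.inr true := by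
  simp [addVert]

lemma addVert_cs (t : T m) (k : Fin m) : addVert t k.castSucc = cU (t k) := by
  simp [addVert]

/-- Delete the last position (assuming it carries a vertical edge). -/
def dropVert (t : T (m+1)) : T m := fun k => cD (t k.castSucc)

lemma not_inl_last {t : T (m+1)} (hg : Good t) (hl : t (Fin.last m) = Sum.inr true)
    (k : Fin m) : t k.castSucc ≠ Sum.inl (Fin.last m) := by
  intro h
  have := hg.2.1 _ _ h
  rw [hl] at this; exact absurd this (by simp)

lemma dropVert_comm {t : T (m+1)} (hg : Good t) (hl : t (Fin.last m) = Sum.inr true)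
    (k : Fin m) : t k.castSucc = cU (dropVert t k) := by
  unfold dropVert
  rcases ht : t k.castSucc with j | b
  · have hj : (j : ℕ) < m := by
      have hne : j ≠ Fin.last m := by
        rintro rfl; exact not_inl_last hg hl k ht
      have h1 := j.isLt
      have h2 : (j : ℕ) ≠ m := fun hc => hne (Fin.ext hc)
      omega
    simp only [cD, hj, dif_pos, cU]
    congr 1
  · rfl

lemma dropVert_inl {t : T (m+1)} (hg : Good t) (hl : t (Fin.last m) = Sum.inr true)
    (k j : Fin m) : dropVert t k = .inl j ↔ t k.castSucc = .inl j.castSucc := by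
  rw [dropVert_comm hg hl k, cU_inl]
  constructor
  · intro h; exact ⟨j, h, rfl⟩
  · rintro ⟨j', h1, h2⟩; rw [Fin.castSucc_inj.1 h2]; exact h1

lemma dropVert_inr {t : T (m+1)} (hg : Good t) (hl : t (Fin.last m) = Sum.inr true)
    (k : Fin m) (b : Bool) : dropVert t k = .inr b ↔ t k.castSucc = .inr b := by
  rw [dropVert_comm hg hl k, cU_inr]

lemma good_dropVert {t : T (m+1)} (hg : Good t) (hl : t (Fin.last m) = Sum.inr true) :
    Good (dropVert t) := by
  have hinl := dropVert_inl hg hl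
  have hinr := dropVert_inr hg hl
  refine ⟨?_, ?_, ?_, ?_, ?_⟩
  · intro i j h
    have := hg.1 _ _ ((hinl i j).1 h)
    exact fun he => this (congrArg Fin.castSucc he)
  · intro i j h
    exact (hinl j i).2 (hg.2.1 _ _ ((hinl i j).1 h))
  · intro i j k l h1 h2 l1 l2 l3
    exact hg.2.2.1 _ _ _ _ ((hinl i j).1 h1) ((hinl k l).1 h2)
      (Fin.castSucc_lt_castSucc_iff.2 l1) (Fin.castSucc_lt_castSucc_iff.2 l2)
      (Fin.castSucc_lt_castSucc_iff.2 l3)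
  · intro i j k h1 l1 l2 hk
    exact hg.2.2.2.1 _ _ _ ((hinl i j).1 h1) (Fin.castSucc_lt_castSucc_iff.2 l1)
      (Fin.castSucc_lt_castSucc_iff.2 l2) ((hinr k true).1 hk)
  · intro k hk
    obtain ⟨i, j, hij, l1, l2⟩ := hg.2.2.2.2 _ ((hinr k false).1 hk)
    have hjne : j ≠ Fin.last m := by
      rintro rfl
      have := hg.2.1 _ _ hij
      rw [hl] at this; exact absurd this (by simp)
    have hine : i ≠ Fin.last m := by
      rintro rfl; rw [hl] at hij; exact absurd hij (by simp)
    refine ⟨i.castPred hine, j.castPred hjne, (hinl _ _).2 ?_, ?_, ?_⟩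
    · rwa [Fin.castSucc_castPred, Fin.castSucc_castPred]
    · have : (i.castPred hine).castSucc < k.castSucc := by
        rwa [Fin.castSucc_castPred]
      exact Fin.castSucc_lt_castSucc_iff.1 this
    · have : k.castSucc < (j.castPred hjne).castSucc := by
        rwa [Fin.castSucc_castPred]
      exact Fin.castSucc_lt_castSucc_iff.1 this

lemma rank_dropVert {t : T (m+1)} (hg : Good t) (hl : t (Fin.last m) = Sum.inr true) :
    rankT t = rankT (dropVert t) + 1 := by
  rw [rank_split t, if_pos hl]
  congr 1
  simp only [rankT]
  refine congrArg Finset.card (Finset.filter_congr fun k _ => ?_)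
  rw [dropVert_inr hg hl]

lemma addVert_inl {t : T m} {x j : Fin (m+1)} (h : addVert t x = .inl j) :
    ∃ x' j' : Fin m, x = x'.castSucc ∧ j = j'.castSucc ∧ t x' = .inl j' := by
  induction x using Fin.lastCases with
  | last => rw [addVert_last] at h; exact absurd h (by simp)
  | cast k =>
      rw [addVert_cs] at h
      obtain ⟨j', h1, h2⟩ := cU_inl.1 h
      exact ⟨k, j', rfl, h2, h1⟩

lemma addVert_true {t : T m} {x : Fin (m+1)} :
    addVert t x = .inr true ↔ x = Fin.last m ∨ ∃ x', x = Fin.castSucc x' ∧ t x' = .inr true := by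
  induction x using Fin.lastCases with
  | last => simp [addVert_last]
  | cast k =>
      rw [addVert_cs, cU_inr]
      constructor
      · intro h; exact Or.inr ⟨k, rfl, h⟩
      · rintro (h | ⟨x', h1, h2⟩)
        · exact absurd h (Fin.castSucc_lt_last k).ne
        · rwa [Fin.castSucc_inj.1 h1]

lemma addVert_false {t : T m} {x : Fin (m+1)} :
    addVert t x = .inr false ↔ ∃ x', x = Fin.castSucc x' ∧ t x' = .inr false := by
  induction x using Fin.lastCases with
  | last =>
      rw [addVert_last]
      constructor
      · intro h; exact absurd h (by simp)
      · rintro ⟨x', h1, h2⟩; exact absurd h1.symm (Fin.castSucc_lt_last x').ne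
  | cast k =>
      rw [addVert_cs, cU_inr]
      constructor
      · intro h; exact ⟨k, rfl, h⟩
      · rintro ⟨x', h1, h2⟩
        rwa [Fin.castSucc_inj.1 h1]

lemma good_addVert {t : T m} (hg : Good t) : Good (addVert t) := by
  refine ⟨?_, ?_, ?_, ?_, ?_⟩
  · intro i j h
    obtain ⟨x', j', rfl, rfl, h3⟩ := addVert_inl h
    exact fun he => (hg.1 _ _ h3) (Fin.castSucc_inj.1 he)
  · intro i j h
    obtain ⟨x', j', rfl, rfl, h3⟩ := addVert_inl h
    rw [addVert_cs, hg.2.1 _ _ h3]; rfl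
  · intro i j k l h1 h2 l1 l2 l3
    obtain ⟨i', j', rfl, rfl, h3⟩ := addVert_inl h1
    obtain ⟨k', l', rfl, rfl, h4⟩ := addVert_inl h2
    exact hg.2.2.1 _ _ _ _ h3 h4 (Fin.castSucc_lt_castSucc_iff.1 l1)
      (Fin.castSucc_lt_castSucc_iff.1 l2) (Fin.castSucc_lt_castSucc_iff.1 l3)
  · intro i j k h1 l1 l2 hk
    obtain ⟨i', j', rfl, rfl, h3⟩ := addVert_inl h1
    rcases addVert_true.1 hk with rfl | ⟨k', rfl, h4⟩
    · exact absurd ((Fin.castSucc_lt_last j').trans' l2) (lt_irrefl _)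
    · exact hg.2.2.2.1 _ _ _ h3 (Fin.castSucc_lt_castSucc_iff.1 l1)
        (Fin.castSucc_lt_castSucc_iff.1 l2) h4
  · intro k hk
    obtain ⟨k', rfl, h2⟩ := addVert_false.1 hk
    obtain ⟨i, j, hij, l1, l2⟩ := hg.2.2.2.2 _ h2
    exact ⟨i.castSucc, j.castSucc, by rw [addVert_cs, hij]; rfl,
      Fin.castSucc_lt_castSucc_iff.2 l1, Fin.castSucc_lt_castSucc_iff.2 l2⟩

lemma rank_addVert (t : T m) : rankT (addVert t) = rankT t + 1 := by
  rw [rank_split, if_pos (addVert_last t)]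
  congr 1
  simp only [rankT]
  refine congrArg Finset.card (Finset.filter_congr fun k _ => ?_)
  rw [addVert_cs, cU_inr]

lemma dropVert_addVert (t : T m) : dropVert (addVert t) = t := by
  funext k
  rw [dropVert, addVert_cs, cD_cU]

lemma addVert_dropVert {t : T (m+1)} (hg : Good t) (hl : t (Fin.last m) = Sum.inr true) :
    addVert (dropVert t) = t := by
  funext x
  induction x using Fin.lastCases with
  | last => rw [addVert_last, hl]
  | cast k => rw [addVert_cs, ← dropVert_comm hg hl]

lemma patR_card_zero : Nat.card (PatR 0 0) = 1 := by
  have hu : Unique (PatR 0 0) := by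
    refine ⟨⟨⟨fun i => i.elim0, ⟨fun i => i.elim0, fun i => i.elim0, fun i => i.elim0,
      fun i => i.elim0, fun i => i.elim0⟩, by simp [rankT]⟩⟩, fun p => ?_⟩
    exact Subtype.ext (funext fun i => i.elim0)
  exact Nat.card_unique

lemma patR_card_of_lt {n r : ℕ} (h : n < r) : Nat.card (PatR n r) = 0 := by
  have : IsEmpty (PatR n r) := by
    refine ⟨fun p => ?_⟩
    have h1 := p.2.2
    have h2 : rankT p.1 ≤ n := by
      calc rankT p.1 ≤ (Finset.univ : Finset (Fin n)).card := Finset.card_filter_le _ _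
        _ = n := by simp
    omega
  exact Nat.card_of_isEmpty

end PartB

/-! ### hook case -/

section Hook

variable {m : ℕ}

lemma rankT_le (t : T m) : rankT t ≤ m := by
  calc rankT t ≤ (Finset.univ : Finset (Fin m)).card := Finset.card_filter_le _ _
    _ = m := by simp

/-- Append a hook from position `u` to a new last position, demoting the
verticals above `u` to singletons. -/
def addHook (t : T m) (u : Fin m) : T (m+1) :=
  Fin.lastCases (Sum.inl u.castSucc) (fun k =>
    match t k with
    | .inl j => .inl j.castSucc
    | .inr true => if k < u then .inr true else if k = u then .inl (Fin.last m) else .inr false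
    | .inr false => .inr false)

lemma addHook_last (t : T m) (u : Fin m) : addHook t u (Fin.last m) = .inl u.castSucc := by
  simp [addHook]

lemma addHook_cs_inl {t : T m} (u : Fin m) {k j : Fin m} (h : t k = .inl j) :
    addHook t u k.castSucc = .inl j.castSucc := by
  simp [addHook, h]

lemma addHook_cs_vlt {t : T m} {u k : Fin m} (h : t k = .inr true) (hlt : k < u) :
    addHook t u k.castSucc = .inr true := by
  simp [addHook, h, hlt]

lemma addHook_cs_u {t : T m} {u : Fin m} (h : t u = .inr true) :
    addHook t u u.castSucc = .inl (Fin.last m) := by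
  simp [addHook, h]

lemma addHook_cs_vgt {t : T m} {u k : Fin m} (h : t k = .inr true) (hgt : u < k) :
    addHook t u k.castSucc = .inr false := by
  have h1 : ¬ k < u := not_lt.2 hgt.le
  have h2 : k ≠ u := hgt.ne'
  simp [addHook, h, h1, h2]

lemma addHook_cs_false {t : T m} (u : Fin m) {k : Fin m} (h : t k = .inr false) :
    addHook t u k.castSucc = .inr false := by
  simp [addHook, h]

lemma addHook_inl_inv {t : T m} {u : Fin m} (hu : t u = .inr true) {x j : Fin (m+1)}
    (h : addHook t u x = .inl j) :
    (x = Fin.last m ∧ j = u.castSucc) ∨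
    (∃ x' j' : Fin m, x = x'.castSucc ∧ j = j'.castSucc ∧ t x' = .inl j') ∨
    (x = u.castSucc ∧ j = Fin.last m) := by
  induction x using Fin.lastCases with
  | last => rw [addHook_last] at h; exact Or.inl ⟨rfl, (Sum.inl.inj h).symm⟩
  | cast k =>
    rcases ht : t k with j' | b
    · rw [addHook_cs_inl u ht] at h
      exact Or.inr (Or.inl ⟨k, j', rfl, (Sum.inl.inj h).symm, ht⟩)
    · cases b
      · rw [addHook_cs_false u ht] at h; simp at h
      · rcases lt_trichotomy k u with hlt | rfl | hgt
        · rw [addHook_cs_vlt ht hlt] at h; simp at h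
        · rw [addHook_cs_u ht] at h
          exact Or.inr (Or.inr ⟨rfl, (Sum.inl.inj h).symm⟩)
        · rw [addHook_cs_vgt ht hgt] at h; simp at h

lemma addHook_true_iff {t : T m} {u : Fin m} (hu : t u = .inr true) {x : Fin (m+1)} :
    addHook t u x = .inr true ↔
      ∃ x' : Fin m, x = x'.castSucc ∧ t x' = .inr true ∧ x' < u := by
  induction x using Fin.lastCases with
  | last =>
      rw [addHook_last]
      constructor
      · intro h; exact absurd h (by simp)
      · rintro ⟨x', h1, _⟩; exact absurd h1.symm (Fin.castSucc_lt_last x').ne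
  | cast k =>
    constructor
    · intro h
      rcases ht : t k with j' | b
      · rw [addHook_cs_inl u ht] at h; simp at h
      · cases b
        · rw [addHook_cs_false u ht] at h; simp at h
        · rcases lt_trichotomy k u with hlt | rfl | hgt
          · exact ⟨k, rfl, ht, hlt⟩
          · rw [addHook_cs_u ht] at h; simp at h
          · rw [addHook_cs_vgt ht hgt] at h; simp at h
    · rintro ⟨x', h1, h2, h3⟩
      obtain rfl : k = x' := Fin.castSucc_inj.1 h1
      exact addHook_cs_vlt h2 h3

lemma addHook_false_iff {t : T m} {u : Fin m} (hu : t u = .inr true) {x : Fin (m+1)} :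
    addHook t u x = .inr false ↔
      ∃ x' : Fin m, x = x'.castSucc ∧
        (t x' = .inr false ∨ (t x' = .inr true ∧ u < x')) := by
  induction x using Fin.lastCases with
  | last =>
      rw [addHook_last]
      constructor
      · intro h; exact absurd h (by simp)
      · rintro ⟨x', h1, _⟩; exact absurd h1.symm (Fin.castSucc_lt_last x').ne
  | cast k =>
    constructor
    · intro h
      rcases ht : t k with j' | b
      · rw [addHook_cs_inl u ht] at h; simp at h
      · cases b
        · exact ⟨k, rfl, Or.inl ht⟩
        · rcases lt_trichotomy k u with hlt | rfl | hgt
          · rw [addHook_cs_vlt ht hlt] at h; simp at h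
          · rw [addHook_cs_u ht] at h; simp at h
          · exact ⟨k, rfl, Or.inr ⟨ht, hgt⟩⟩
    · rintro ⟨x', h1, h2⟩
      obtain rfl : k = x' := Fin.castSucc_inj.1 h1
      rcases h2 with h2 | ⟨h2, h3⟩
      · exact addHook_cs_false u h2
      · exact addHook_cs_vgt h2 h3

lemma good_addHook {t : T m} {u : Fin m} (hg : Good t) (hu : t u = .inr true) :
    Good (addHook t u) := by
  refine ⟨?_, ?_, ?_, ?_, ?_⟩
  · intro x j h
    rcases addHook_inl_inv hu h with ⟨rfl, rfl⟩ | ⟨x', j', rfl, rfl, h3⟩ | ⟨rfl, rfl⟩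
    · exact (Fin.castSucc_lt_last u).ne
    · exact fun he => (hg.1 _ _ h3) (Fin.castSucc_inj.1 he)
    · exact (Fin.castSucc_lt_last u).ne'
  · intro x j h
    rcases addHook_inl_inv hu h with ⟨rfl, rfl⟩ | ⟨x', j', rfl, rfl, h3⟩ | ⟨rfl, rfl⟩
    · exact addHook_cs_u hu
    · exact addHook_cs_inl u (hg.2.1 _ _ h3)
    · exact addHook_last t u
  · intro i j k l h1 h2 l1 l2 l3
    rcases addHook_inl_inv hu h1 with ⟨rfl, rfl⟩ | ⟨i', j', rfl, rfl, h3⟩ | ⟨rfl, rfl⟩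
    · exact absurd l1 (not_lt.2 (Fin.le_last k))
    · rcases addHook_inl_inv hu h2 with ⟨rfl, rfl⟩ | ⟨k', l', rfl, rfl, h4⟩ | ⟨rfl, rfl⟩
      · exact absurd l2 (not_lt.2 (Fin.le_last _))
      · exact hg.2.2.1 _ _ _ _ h3 h4 (Fin.castSucc_lt_castSucc_iff.1 l1)
          (Fin.castSucc_lt_castSucc_iff.1 l2) (Fin.castSucc_lt_castSucc_iff.1 l3)
      · exact hg.2.2.2.1 _ _ _ h3 (Fin.castSucc_lt_castSucc_iff.1 l1)
          (Fin.castSucc_lt_castSucc_iff.1 l2) hu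
    · exact absurd l3 (not_lt.2 (Fin.le_last l))
  · intro i j k h1 l1 l2 hk
    obtain ⟨k', rfl, hk', hklt⟩ := (addHook_true_iff hu).1 hk
    rcases addHook_inl_inv hu h1 with ⟨rfl, rfl⟩ | ⟨i', j', rfl, rfl, h3⟩ | ⟨rfl, rfl⟩
    · exact absurd l1 (not_lt.2 (Fin.le_last _))
    · exact hg.2.2.2.1 _ _ _ h3 (Fin.castSucc_lt_castSucc_iff.1 l1)
        (Fin.castSucc_lt_castSucc_iff.1 l2) hk'
    · exact absurd hklt (not_lt.2 (Fin.castSucc_lt_castSucc_iff.1 l1).le)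
  · intro k hk
    obtain ⟨k', rfl, hcase⟩ := (addHook_false_iff hu).1 hk
    rcases hcase with h2 | ⟨h2, h3⟩
    · obtain ⟨a, b, hab, l1, l2⟩ := hg.2.2.2.2 _ h2
      exact ⟨a.castSucc, b.castSucc, addHook_cs_inl u hab,
        Fin.castSucc_lt_castSucc_iff.2 l1, Fin.castSucc_lt_castSucc_iff.2 l2⟩
    · exact ⟨u.castSucc, Fin.last m, addHook_cs_u hu,
        Fin.castSucc_lt_castSucc_iff.2 h3, Fin.castSucc_lt_last k'⟩

lemma rank_addHook {t : T m} {u : Fin m} (hu : t u = .inr true) :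
    rankT (addHook t u) = (Finset.univ.filter fun k => t k = Sum.inr true ∧ k < u).card := by
  rw [rank_split, if_neg (by rw [addHook_last]; simp), add_zero]
  refine congrArg Finset.card (Finset.filter_congr fun k _ => ?_)
  constructor
  · intro h
    obtain ⟨x', h1, h2, h3⟩ := (addHook_true_iff hu).1 h
    obtain rfl : k = x' := Fin.castSucc_inj.1 h1
    exact ⟨h2, h3⟩
  · rintro ⟨h2, h3⟩
    exact addHook_cs_vlt h2 h3

/-- `k` is nested only by hooks with left end `u`. -/
def onlyHook (t : T (m+1)) (u k : Fin (m+1)) : Prop :=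
  ∀ i j, t i = .inl j → i < k → k < j → i = u

/-- Delete the last position, assumed to carry a hook `{u, last}`; `u` becomes
a vertical, and so does every singleton nested only by the removed hook. -/
def dropHook (t : T (m+1)) (u : Fin (m+1)) : T m := fun k =>
  if t k.castSucc = .inl (Fin.last m) then .inr true
  else if t k.castSucc = .inr false ∧ u < k.castSucc ∧ onlyHook t u k.castSucc then .inr true
  else cD (t k.castSucc)

variable {t : T (m+1)} {U : Fin (m+1)}

lemma inl_last_unique (hg : Good t) (hU : t (Fin.last m) = .inl U) {a : Fin (m+1)}
    (h : t a = .inl (Fin.last m)) : a = U := by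
  have h2 := hg.2.1 _ _ h
  rw [hU] at h2
  exact (Sum.inl.inj h2).symm

lemma dropHook_inl_iff (hg : Good t) (hU : t (Fin.last m) = .inl U) (k j : Fin m) :
    dropHook t U k = .inl j ↔ t k.castSucc = .inl j.castSucc := by
  unfold dropHook
  split_ifs with h1 h2
  · refine iff_of_false (by simp) fun hc => ?_
    rw [h1] at hc
    exact (Fin.castSucc_lt_last j).ne' (Sum.inl.inj hc)
  · refine iff_of_false (by simp) fun hc => ?_
    rw [h2.1] at hc; simp at hc
  · rcases ht : t k.castSucc with j' | b
    · have hj' : (j' : ℕ) < m := by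
        have hne : j' ≠ Fin.last m := fun hc => h1 (by rw [ht, hc])
        have := j'.isLt
        have : (j' : ℕ) ≠ m := fun hc => hne (Fin.ext hc)
        omega
      simp only [cD, hj', dif_pos]
      constructor
      · intro hc
        obtain rfl : (⟨(j' : ℕ), hj'⟩ : Fin m) = j := Sum.inl.inj hc
        exact congrArg Sum.inl (Fin.ext rfl)
      · intro hc
        obtain hc2 := Sum.inl.inj hc
        congr 1
        exact Fin.ext (by simpa using congrArg Fin.val hc2)
    · simp [cD]
end Hook

section Hook2

variable {m : ℕ} {t : T (m+1)} {U : Fin (m+1)}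

lemma dropHook_true_iff (k : Fin m) :
    dropHook t U k = .inr true ↔
      (t k.castSucc = .inl (Fin.last m) ∨
       (t k.castSucc = .inr false ∧ U < k.castSucc ∧ onlyHook t U k.castSucc) ∨
       t k.castSucc = .inr true) := by
  unfold dropHook
  split_ifs with h1 h2
  · exact iff_of_true rfl (Or.inl h1)
  · exact iff_of_true rfl (Or.inr (Or.inl h2))
  · constructor
    · intro h
      rcases ht : t k.castSucc with j' | b
      · by_cases h3 : (j' : ℕ) < m
        · rw [ht] at h; simp [cD, h3] at h
        · have h4 : j' = Fin.last m := Fin.ext (by have := j'.isLt; simp [Fin.last]; omega)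
          exact Or.inl (by rw [h4])
      · cases b
        · rw [ht] at h; simp [cD] at h
        · exact Or.inr (Or.inr rfl)
    · rintro (h | h | h)
      · exact absurd h h1
      · exact absurd h h2
      · rw [h]; rfl

lemma dropHook_false_iff (k : Fin m) :
    dropHook t U k = .inr false ↔
      t k.castSucc = .inr false ∧ ¬(U < k.castSucc ∧ onlyHook t U k.castSucc) := by
  unfold dropHook
  split_ifs with h1 h2
  · refine iff_of_false (by simp) fun hc => ?_
    rw [h1] at hc; simp at hc
  · exact iff_of_false (by simp) fun hc => hc.2 ⟨h2.2.1, h2.2.2⟩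
  · constructor
    · intro h
      rcases ht : t k.castSucc with j' | b
      · rw [ht] at h
        by_cases h3 : (j' : ℕ) < m <;> simp [cD, h3] at h
      · cases b
        · exact ⟨rfl, fun hc => h2 ⟨ht, hc.1, hc.2⟩⟩
        · rw [ht] at h; simp [cD] at h
    · rintro ⟨h3, _⟩
      rw [h3]; rfl

lemma good_dropHook (hg : Good t) (hU : t (Fin.last m) = .inl U) :
    Good (dropHook t U) := by
  have hUl : t U = .inl (Fin.last m) := hg.2.1 _ _ hU
  have hinl := dropHook_inl_iff hg hU
  refine ⟨?_, ?_, ?_, ?_, ?_⟩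
  · intro i j h
    have := hg.1 _ _ ((hinl i j).1 h)
    exact fun he => this (congrArg Fin.castSucc he)
  · intro i j h
    exact (hinl j i).2 (hg.2.1 _ _ ((hinl i j).1 h))
  · intro i j k l h1 h2 l1 l2 l3
    exact hg.2.2.1 _ _ _ _ ((hinl i j).1 h1) ((hinl k l).1 h2)
      (Fin.castSucc_lt_castSucc_iff.2 l1) (Fin.castSucc_lt_castSucc_iff.2 l2)
      (Fin.castSucc_lt_castSucc_iff.2 l3)
  · intro i j k h1 l1 l2 hk
    have hookt := (hinl i j).1 h1
    rcases (dropHook_true_iff k).1 hk with h3 | ⟨h3, h4, h5⟩ | h3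
    · have hkU : k.castSucc = U := inl_last_unique hg hU h3
      refine hg.2.2.1 i.castSucc j.castSucc U (Fin.last m) hookt hUl ?_ ?_
        (Fin.castSucc_lt_last j)
      · rw [← hkU]; exact Fin.castSucc_lt_castSucc_iff.2 l1
      · rw [← hkU]; exact Fin.castSucc_lt_castSucc_iff.2 l2
    · have := h5 i.castSucc j.castSucc hookt (Fin.castSucc_lt_castSucc_iff.2 l1)
        (Fin.castSucc_lt_castSucc_iff.2 l2)
      rw [this, hUl] at hookt
      exact (Fin.castSucc_lt_last j).ne' (Sum.inl.inj hookt)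
    · exact hg.2.2.2.1 _ _ _ hookt (Fin.castSucc_lt_castSucc_iff.2 l1)
        (Fin.castSucc_lt_castSucc_iff.2 l2) h3
  · intro k hk
    obtain ⟨hf, hnc⟩ := (dropHook_false_iff k).1 hk
    have key : ∃ a b : Fin (m+1), t a = .inl b ∧ a < k.castSucc ∧ k.castSucc < b ∧ a ≠ U := by
      by_cases hUk : U < k.castSucc
      · have hno : ¬ onlyHook t U k.castSucc := fun ho => hnc ⟨hUk, ho⟩
        unfold onlyHook at hno
        push_neg at hno
        obtain ⟨a, b, hab, l1, l2, hne⟩ := hno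
        exact ⟨a, b, hab, l1, l2, hne⟩
      · obtain ⟨a, b, hab, l1, l2⟩ := hg.2.2.2.2 _ hf
        refine ⟨a, b, hab, l1, l2, fun he => hUk ?_⟩
        rw [← he]; exact l1
    obtain ⟨a, b, hab, l1, l2, hane⟩ := key
    have hbne : b ≠ Fin.last m := by
      rintro rfl; exact hane (inl_last_unique hg hU hab)
    have hblt : b < Fin.last m := lt_of_le_of_ne (Fin.le_last b) hbne
    have halt : a < Fin.last m := l1.trans (l2.trans hblt)
    have hane' : a ≠ Fin.last m := halt.ne
    refine ⟨a.castPred hane', b.castPred hbne, (hinl _ _).2 ?_, ?_, ?_⟩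
    · rwa [Fin.castSucc_castPred, Fin.castSucc_castPred]
    · have : (a.castPred hane').castSucc < k.castSucc := by rwa [Fin.castSucc_castPred]
      exact Fin.castSucc_lt_castSucc_iff.1 this
    · have : k.castSucc < (b.castPred hbne).castSucc := by rwa [Fin.castSucc_castPred]
      exact Fin.castSucc_lt_castSucc_iff.1 this

lemma rankT_eq_oldverts (hU : t (Fin.last m) = .inl U) :
    rankT t = (Finset.univ.filter fun k : Fin m => t k.castSucc = Sum.inr true).card := by
  rw [rank_split, if_neg (by rw [hU]; simp), add_zero]

lemma dropHook_old_vert_lt (hg : Good t) (hU : t (Fin.last m) = .inl U) {k : Fin m}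
    (h : t k.castSucc = .inr true) : k.castSucc < U := by
  have hUl : t U = .inl (Fin.last m) := hg.2.1 _ _ hU
  by_cases hlt : U < k.castSucc
  · exact absurd h (hg.2.2.2.1 U (Fin.last m) k.castSucc hUl hlt (Fin.castSucc_lt_last k))
  · have hne : k.castSucc ≠ U := fun he => by rw [he, hUl] at h; exact absurd h (by simp)
    exact lt_of_le_of_ne (not_lt.1 hlt) hne

lemma dropHook_rank_lower (hg : Good t) (hU : t (Fin.last m) = .inl U) :
    rankT t + 1 ≤ rankT (dropHook t U) := by
  have hUne : U ≠ Fin.last m := hg.1 _ _ hU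
  have hUl : t U = .inl (Fin.last m) := hg.2.1 _ _ hU
  set U' := U.castPred hUne with hU'
  set C := Finset.univ.filter fun k : Fin m => t k.castSucc = Sum.inr true with hC
  have hCne : U' ∉ C := by
    intro hc
    rw [hC, Finset.mem_filter] at hc
    rw [hU', Fin.castSucc_castPred, hUl] at hc
    exact absurd hc.2 (by simp)
  have hsub : insert U' C ⊆ Finset.univ.filter fun k : Fin m => dropHook t U k = Sum.inr true := by
    intro x hx
    rcases Finset.mem_insert.1 hx with rfl | hx
    · refine Finset.mem_filter.2 ⟨Finset.mem_univ _, (dropHook_true_iff _).2 (Or.inl ?_)⟩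
      rw [hU', Fin.castSucc_castPred]; exact hUl
    · rw [hC, Finset.mem_filter] at hx
      exact Finset.mem_filter.2 ⟨Finset.mem_univ _, (dropHook_true_iff _).2 (Or.inr (Or.inr hx.2))⟩
  calc rankT t + 1 = C.card + 1 := by rw [rankT_eq_oldverts hU]
    _ = (insert U' C).card := (Finset.card_insert_of_notMem hCne).symm
    _ ≤ _ := Finset.card_le_card hsub
    -- target : rankT (dropHook t U)

lemma dropHook_count (hg : Good t) (hU : t (Fin.last m) = .inl U) (hUne : U ≠ Fin.last m) :
    (Finset.univ.filter fun k : Fin m =>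
        dropHook t U k = Sum.inr true ∧ k < U.castPred hUne).card = rankT t := by
  rw [rankT_eq_oldverts hU]
  refine congrArg Finset.card (Finset.filter_congr fun k _ => ?_)
  constructor
  · rintro ⟨hv, hlt⟩
    rcases (dropHook_true_iff k).1 hv with h3 | ⟨h3, h4, h5⟩ | h3
    · have hkU : k.castSucc = U := inl_last_unique hg hU h3
      have hk' : k = U.castPred hUne := by
        apply Fin.castSucc_inj.1
        rw [Fin.castSucc_castPred]; exact hkU
      rw [hk'] at hlt; exact absurd hlt (lt_irrefl _)
    · have : k.castSucc < U := by
        have := Fin.castSucc_lt_castSucc_iff.2 hlt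
        rwa [Fin.castSucc_castPred] at this
      exact absurd h4 (not_lt.2 this.le)
    · exact h3
  · intro hv
    have hlt := dropHook_old_vert_lt hg hU hv
    refine ⟨(dropHook_true_iff k).2 (Or.inr (Or.inr hv)), ?_⟩
    have : k.castSucc < (U.castPred hUne).castSucc := by rwa [Fin.castSucc_castPred]
    exact Fin.castSucc_lt_castSucc_iff.1 this

end Hook2

section RoundTrips

variable {m : ℕ}

lemma dropHook_addHook {q : T m} (hg : Good q) {u : Fin m} (hu : q u = .inr true) :
    dropHook (addHook q u) u.castSucc = q := by
  have hg' : Good (addHook q u) := good_addHook hg hu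
  have hU' : addHook q u (Fin.last m) = .inl u.castSucc := addHook_last q u
  funext k
  rcases hq : q k with l | b
  · have h1 : addHook q u k.castSucc = .inl l.castSucc := addHook_cs_inl u hq
    exact (dropHook_inl_iff hg' hU' k l).2 h1
  · cases b
    · refine (dropHook_false_iff k).2 ⟨addHook_cs_false u hq, ?_⟩
      rintro ⟨hlt, honly⟩
      obtain ⟨a, b, hab, l1, l2⟩ := hg.2.2.2.2 _ hq
      have heq := honly a.castSucc b.castSucc (addHook_cs_inl u hab)
        (Fin.castSucc_lt_castSucc_iff.2 l1) (Fin.castSucc_lt_castSucc_iff.2 l2)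
      have ha : a = u := Fin.castSucc_inj.1 heq
      rw [ha, hu] at hab; exact absurd hab (by simp)
    · rcases lt_trichotomy k u with hlt | heq | hgt
      · exact (dropHook_true_iff k).2 (Or.inr (Or.inr (addHook_cs_vlt hq hlt)))
      · rw [heq] at hq ⊢
        exact (dropHook_true_iff u).2 (Or.inl (addHook_cs_u hq))
      · refine (dropHook_true_iff k).2 (Or.inr (Or.inl
          ⟨addHook_cs_vgt hq hgt, Fin.castSucc_lt_castSucc_iff.2 hgt, ?_⟩))
        intro i j hij li lj
        rcases addHook_inl_inv hu hij with ⟨rfl, rfl⟩ | ⟨i', j', rfl, rfl, h3⟩ | ⟨rfl, rfl⟩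
        · exact absurd li (not_lt.2 (Fin.le_last _))
        · exact absurd hq (hg.2.2.2.1 _ _ _ h3 (Fin.castSucc_lt_castSucc_iff.1 li)
            (Fin.castSucc_lt_castSucc_iff.1 lj))
        · rfl

lemma addHook_dropHook {t : T (m+1)} {U : Fin (m+1)} (hg : Good t)
    (hU : t (Fin.last m) = .inl U) (hUne : U ≠ Fin.last m) :
    addHook (dropHook t U) (U.castPred hUne) = t := by
  have hUl : t U = .inl (Fin.last m) := hg.2.1 _ _ hU
  set u := U.castPred hUne with hudef
  have hucs : u.castSucc = U := Fin.castSucc_castPred _ _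
  have hverts_u : dropHook t U u = .inr true :=
    (dropHook_true_iff u).2 (Or.inl (by rw [hucs]; exact hUl))
  funext x
  induction x using Fin.lastCases with
  | last => rw [addHook_last, hU, hucs]
  | cast k =>
    rcases ht : t k.castSucc with j | b
    · by_cases hj : j = Fin.last m
      · subst hj
        have hkU : k.castSucc = U := inl_last_unique hg hU ht
        have hk : k = u := by
          apply Fin.castSucc_inj.1; rw [hucs]; exact hkU
        rw [hk, addHook_cs_u hverts_u]
      · have hdk : dropHook t U k = .inl (j.castPred hj) :=
          (dropHook_inl_iff hg hU k (j.castPred hj)).2 (by rw [Fin.castSucc_castPred]; exact ht)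
        rw [addHook_cs_inl u hdk, Fin.castSucc_castPred]
    · cases b
      · by_cases hc : U < k.castSucc ∧ onlyHook t U k.castSucc
        · have hdk : dropHook t U k = .inr true :=
            (dropHook_true_iff k).2 (Or.inr (Or.inl ⟨ht, hc.1, hc.2⟩))
          have hgt : u < k := by
            apply Fin.castSucc_lt_castSucc_iff.1; rw [hucs]; exact hc.1
          rw [addHook_cs_vgt hdk hgt]
        · have hdk : dropHook t U k = .inr false := (dropHook_false_iff k).2 ⟨ht, hc⟩
          rw [addHook_cs_false u hdk]
      · have hklt : k.castSucc < U := dropHook_old_vert_lt hg hU ht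
        have hdk : dropHook t U k = .inr true := (dropHook_true_iff k).2 (Or.inr (Or.inr ht))
        have hlt : k < u := by
          apply Fin.castSucc_lt_castSucc_iff.1; rw [hucs]; exact hklt
        rw [addHook_cs_vlt hdk hlt]

end RoundTrips

section Pick

variable {m : ℕ}

lemma count_lt_strictmono (s : Finset (Fin m)) {v w : Fin m} (hv : v ∈ s) (hlt : v < w) :
    (s.filter (· < v)).card < (s.filter (· < w)).card := by
  apply Finset.card_lt_card
  rw [Finset.ssubset_def]
  constructor
  · intro x hx
    rw [Finset.mem_filter] at *
    exact ⟨hx.1, hx.2.trans hlt⟩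
  · intro hsub
    have h1 : v ∈ s.filter (· < w) := Finset.mem_filter.2 ⟨hv, hlt⟩
    have h2 := hsub h1
    rw [Finset.mem_filter] at h2
    exact absurd h2.2 (lt_irrefl _)

lemma pick_count (s : Finset (Fin m)) {k : ℕ} (h : s.card = k) (i : Fin k) :
    (s.filter (· < s.orderEmbOfFin h i)).card = i := by
  have himg : s.filter (· < s.orderEmbOfFin h i)
      = (Finset.univ.filter (· < i)).image (s.orderEmbOfFin h) := by
    ext v
    simp only [Finset.mem_filter, Finset.mem_image, Finset.mem_univ, true_and]
    constructor
    · rintro ⟨hv, hlt⟩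
      obtain ⟨a, ha⟩ : ∃ a, s.orderEmbOfFin h a = v := by
        have hr : v ∈ Set.range (s.orderEmbOfFin h) := by
          rw [Finset.range_orderEmbOfFin]; exact hv
        exact hr
      refine ⟨a, ?_, ha⟩
      rw [← ha] at hlt
      exact (OrderEmbedding.lt_iff_lt _).1 hlt
    · rintro ⟨a, ha, rfl⟩
      exact ⟨Finset.orderEmbOfFin_mem s h a, (OrderEmbedding.lt_iff_lt _).2 ha⟩
  rw [himg, Finset.card_image_of_injective _ (s.orderEmbOfFin h).injective]
  have hIio : (Finset.univ.filter (· < i) : Finset (Fin k)) = Finset.Iio i := by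
    ext a; simp
  rw [hIio, Fin.card_Iio]

lemma pick_unique (s : Finset (Fin m)) {k : ℕ} (h : s.card = k) (i : Fin k) {v : Fin m}
    (hv : v ∈ s) (hc : (s.filter (· < v)).card = (i : ℕ)) : s.orderEmbOfFin h i = v := by
  rcases lt_trichotomy (s.orderEmbOfFin h i) v with hlt | he | hgt
  · have hmono := count_lt_strictmono s (Finset.orderEmbOfFin_mem s h i) hlt
    rw [pick_count, hc] at hmono
    exact absurd hmono (lt_irrefl _)
  · exact he
  · have hmono := count_lt_strictmono s hv hgt
    rw [hc, pick_count] at hmono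
    exact absurd hmono (lt_irrefl _)

end Pick

section Final

variable {m : ℕ}

lemma last_not_false {t : T (m+1)} (hg : Good t) : t (Fin.last m) ≠ Sum.inr false := by
  intro h
  obtain ⟨i, j, hij, l1, l2⟩ := hg.2.2.2.2 _ h
  exact absurd l2 (not_lt.2 (Fin.le_last j))

/-- The `(r+1)`-st smallest vertical of `q`. -/
def pickU (q : T m) (j r : ℕ) (hrq : rankT q = j) (hr : r < j) : Fin m :=
  (Finset.univ.filter fun i => q i = Sum.inr true).orderEmbOfFin hrq ⟨r, hr⟩

lemma pickU_vert (q : T m) (j r : ℕ) (hrq : rankT q = j) (hr : r < j) :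
    q (pickU q j r hrq hr) = Sum.inr true := by
  have := Finset.orderEmbOfFin_mem (Finset.univ.filter fun i => q i = Sum.inr true) hrq ⟨r, hr⟩
  exact (Finset.mem_filter.1 this).2

lemma pickU_count (q : T m) (j r : ℕ) (hrq : rankT q = j) (hr : r < j) :
    (Finset.univ.filter fun k => q k = Sum.inr true ∧ k < pickU q j r hrq hr).card = r := by
  have hset : (Finset.univ.filter fun k => q k = Sum.inr true ∧ k < pickU q j r hrq hr)
      = (Finset.univ.filter fun i => q i = Sum.inr true).filter (· < pickU q j r hrq hr) := by
    rw [Finset.filter_filter]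
  rw [hset, pickU]; exact pick_count _ hrq ⟨r, hr⟩

lemma pickU_unique (q : T m) (j r : ℕ) (hrq : rankT q = j) (hr : r < j) {v : Fin m}
    (hv : q v = Sum.inr true)
    (hc : (Finset.univ.filter fun k => q k = Sum.inr true ∧ k < v).card = r) :
    pickU q j r hrq hr = v := by
  apply pick_unique
  · exact Finset.mem_filter.2 ⟨Finset.mem_univ _, hv⟩
  · rw [Finset.filter_filter]; exact hc

def Bleft (m r : ℕ) := {q : PatR m (r-1) // 1 ≤ r}
def Bright (m r : ℕ) := Σ j : (Finset.Icc (r+1) m), PatR m (j : ℕ)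

instance instFinT (n : ℕ) : Finite (T n) := by unfold T; infer_instance
instance instFinPatR (n r : ℕ) : Finite (PatR n r) := by unfold PatR; infer_instance
instance instFinBleft (m r : ℕ) : Finite (Bleft m r) := by unfold Bleft; infer_instance
instance instFinBright (m r : ℕ) : Finite (Bright m r) := by unfold Bright; infer_instance

lemma sigma_eq {I : Finset ℕ} {a b : I} (x : PatR m (a : ℕ)) (y : PatR m (b : ℕ))
    (h1 : (a : ℕ) = (b : ℕ)) (h2 : x.1 = y.1) :
    (⟨a, x⟩ : Σ i : I, PatR m (i : ℕ)) = ⟨b, y⟩ := by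
  obtain rfl : a = b := Subtype.ext h1
  exact congrArg _ (Subtype.ext h2)

def EquivB (m r : ℕ) : PatR (m+1) r ≃ Bleft m r ⊕ Bright m r where
  toFun p :=
    if h1 : p.1 (Fin.last m) = Sum.inr true then
      Sum.inl ⟨⟨dropVert p.1, good_dropVert p.2.1 h1,
        by have h := rank_dropVert p.2.1 h1; have h2 := p.2.2; omega⟩,
        by have h := rank_dropVert p.2.1 h1; have h2 := p.2.2; omega⟩
    else if h2 : ∃ U, p.1 (Fin.last m) = Sum.inl U then
      Sum.inr ⟨⟨rankT (dropHook p.1 h2.choose),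
        Finset.mem_Icc.2 ⟨by
            have h3 := dropHook_rank_lower p.2.1 h2.choose_spec
            have h4 := p.2.2; omega,
          rankT_le _⟩⟩,
        ⟨dropHook p.1 h2.choose, good_dropHook p.2.1 h2.choose_spec, rfl⟩⟩
    else
      False.elim (by
        rcases ht : p.1 (Fin.last m) with j | b
        · exact h2 ⟨j, ht⟩
        · cases b
          · exact last_not_false p.2.1 ht
          · exact h1 ht)
  invFun x :=
    match x with
    | Sum.inl ⟨⟨q, hgq, hrq⟩, hr1⟩ =>
        ⟨addVert q, good_addVert hgq, by rw [rank_addVert, hrq]; omega⟩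
    | Sum.inr ⟨⟨j, hj⟩, ⟨q, hgq, hrq⟩⟩ =>
        have hrlt : r < j := by have := (Finset.mem_Icc.1 hj).1; omega
        ⟨addHook q (pickU q j r hrq hrlt),
          good_addHook hgq (pickU_vert q j r hrq hrlt),
          by rw [rank_addHook (pickU_vert q j r hrq hrlt), pickU_count]⟩
  left_inv := by
    intro p
    dsimp only
    by_cases h1 : p.1 (Fin.last m) = Sum.inr true
    · rw [dif_pos h1]
      exact Subtype.ext (addVert_dropVert p.2.1 h1)
    · by_cases h2 : ∃ U, p.1 (Fin.last m) = Sum.inl U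
      · rw [dif_neg h1, dif_pos h2]
        have hU : p.1 (Fin.last m) = Sum.inl h2.choose := h2.choose_spec
        have hUne : h2.choose ≠ Fin.last m := p.2.1.1 _ _ hU
        apply Subtype.ext
        show addHook (dropHook p.1 h2.choose) (pickU _ _ _ _ _) = p.1
        have hpk : pickU (dropHook p.1 h2.choose) (rankT (dropHook p.1 h2.choose)) r rfl
            (by have h3 := dropHook_rank_lower p.2.1 hU; have h4 := p.2.2; omega)
            = h2.choose.castPred hUne := by
          apply pickU_unique
          · exact (dropHook_true_iff _).2 (Or.inl (by
              rw [Fin.castSucc_castPred]; exact p.2.1.2.1 _ _ hU))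
          · rw [dropHook_count p.2.1 hU hUne]; exact p.2.2
        rw [hpk]
        exact addHook_dropHook p.2.1 hU hUne
      · exfalso
        rcases ht : p.1 (Fin.last m) with j | b
        · exact h2 ⟨j, ht⟩
        · cases b
          · exact last_not_false p.2.1 ht
          · exact h1 ht
  right_inv := by
    rintro (⟨⟨q, hgq, hrq⟩, hr1⟩ | ⟨⟨j, hj⟩, ⟨q, hgq, hrq⟩⟩)
    · show (if h1 : addVert q (Fin.last m) = Sum.inr true then _ else _) = _
      rw [dif_pos (addVert_last q)]
      exact congrArg Sum.inl (Subtype.ext (Subtype.ext (dropVert_addVert q)))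
    · have hrlt : r < j := by have := (Finset.mem_Icc.1 hj).1; omega
      set u := pickU q j r hrq hrlt with hudef
      have hu : q u = Sum.inr true := pickU_vert q j r hrq hrlt
      have hvl : addHook q u (Fin.last m) = Sum.inl u.castSucc := addHook_last q u
      have h1 : ¬ (addHook q u (Fin.last m) = Sum.inr true) := by rw [hvl]; simp
      have h2 : ∃ U, addHook q u (Fin.last m) = Sum.inl U := ⟨u.castSucc, hvl⟩
      show (if _ : addHook q u (Fin.last m) = Sum.inr true then _ else _) = _
      rw [dif_neg h1, dif_pos h2]
      have hUc : h2.choose = u.castSucc :=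
        (Sum.inl.inj (hvl.symm.trans h2.choose_spec)).symm
      have hdrop : dropHook (addHook q u) h2.choose = q := by
        rw [hUc]; exact dropHook_addHook hgq hu
      refine congrArg Sum.inr (sigma_eq _ _ ?_ ?_)
      · show rankT (dropHook (addHook q u) h2.choose) = j
        rw [hdrop]; exact hrq
      · exact hdrop

lemma card_split (m r : ℕ) :
    Nat.card (PatR (m+1) r) = (if r = 0 then 0 else Nat.card (PatR m (r-1)))
      + ∑ j ∈ Finset.Icc (r+1) m, Nat.card (PatR m j) := by
  rw [Nat.card_congr (EquivB m r), Nat.card_sum]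
  congr 1
  · by_cases hr : r = 0
    · subst hr
      haveI : IsEmpty (Bleft m 0) := ⟨fun x => by have := x.2; omega⟩
      rw [if_pos rfl]
      exact Nat.card_of_isEmpty
    · rw [if_neg hr]
      exact Nat.card_congr (Equiv.subtypeUnivEquiv fun _ => Nat.one_le_iff_ne_zero.2 hr)
  · classical
    letI : ∀ j : (Finset.Icc (r+1) m), Fintype (PatR m (j : ℕ)) := fun j => Fintype.ofFinite _
    have hb : Nat.card (Bright m r) = ∑ j : (Finset.Icc (r+1) m), Nat.card (PatR m (j : ℕ)) := by
      show Nat.card (Σ j : (Finset.Icc (r+1) m), PatR m (j : ℕ)) = _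
      rw [Nat.card_eq_fintype_card, Fintype.card_sigma]
      exact Finset.sum_congr rfl fun j _ => (Nat.card_eq_fintype_card).symm
    rw [hb]
    exact Finset.sum_coe_sort (Finset.Icc (r+1) m) (fun j => Nat.card (PatR m j))

end Final

end PMAux

/-- The recurrence for the number `p'(n,r)` of projections in
`D_r(M_n)` having no unnested singleton block; terms with out-of-range indices
are `0` (note `r - 1` is out of range when `r = 0`, whence the `if`). -/
theorem pM'_recurrence :
    pM' 0 0 = 1 ∧
    (∀ n r : ℕ, n < r → pM' n r = 0) ∧
    (∀ n r : ℕ, 1 ≤ n → r ≤ n →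
      pM' n r = (if r = 0 then 0 else pM' (n - 1) (r - 1)) +
        ∑ j ∈ Finset.Icc (r + 1) (n - 1), pM' (n - 1) j) := by
  refine ⟨?_, ?_, ?_⟩
  · rw [PMAux.pM'_eq_card 0 0]
    exact PMAux.patR_card_zero
  · intro n r h
    rw [PMAux.pM'_eq_card n r]
    exact PMAux.patR_card_of_lt h
  · intro n r h1 _
    obtain ⟨m, rfl⟩ : ∃ m, n = m + 1 := ⟨n - 1, by omega⟩
    simp only [Nat.add_sub_cancel]
    rw [PMAux.pM'_eq_card (m+1) r, PMAux.card_split]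
    congr 1
    · split_ifs with hr
      · rfl
      · exact (PMAux.pM'_eq_card m (r-1)).symm
    · exact Finset.sum_congr rfl fun j _ => (PMAux.pM'_eq_card m j).symm
end
end

section
/- For every α ∈ D_r(PB_n) there exist idempotents β, δ ∈ E(D_r(PB_n)) and an element γ ∈ S_{[r]} such that α = β · λ_{dom(α)} · γ · ρ_{codom(α)} · δ. -/
/-!
Partial Brauer diagrams on `n` points are formalized as set partitions
(equivalence relations, i.e. `Setoid`s) of the vertex set
`{1,…,n} ∪ {1',…,n'}`, encoded as `Fin n ⊕ Fin n`
(`Sum.inl i` is the upper vertex `i`, `Sum.inr i` is the lower vertex `i'`),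
all of whose blocks have size at most 2.  The product of two diagrams is
defined via connectivity (paths) in the product graph, and the involution `*`
by interchanging the two rows of vertices.
-/

noncomputable section

open scoped Classical

open Dgm
namespace Dgm

variable {n : ℕ}

/-- The diagram (partition into blocks of size ≤ 2) given by an involution. -/
def ofMatch (m : PBV n → PBV n) (hm : ∀ x, m (m x) = x) : Dgm n where
  r x y := x = y ∨ m x = y
  iseqv := by
    refine ⟨fun x => Or.inl rfl, ?_, ?_⟩
    · rintro x y (rfl | rfl)
      · exact Or.inl rfl
      · exact Or.inr (hm x)
    · rintro x y z (rfl | rfl) h2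
      · exact h2
      · rcases h2 with rfl | h2
        · exact Or.inr rfl
        · exact Or.inl ((hm x).symm.trans h2)

lemma ofMatch_r {m : PBV n → PBV n} {hm : ∀ x, m (m x) = x} (x y : PBV n) :
    (ofMatch m hm).r x y ↔ x = y ∨ m x = y := Iff.rfl

lemma ofMatch_ext {m m' : PBV n → PBV n} {hm : ∀ x, m (m x) = x}
    {hm' : ∀ x, m' (m' x) = x} (h : ∀ x, m x = m' x) :
    ofMatch m hm = ofMatch m' hm' := by
  have : m = m' := funext h
  subst this
  rfl

lemma isPB_ofMatch (m : PBV n → PBV n) (hm : ∀ x, m (m x) = x) :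
    IsPB (ofMatch m hm) := by
  rintro x y z (rfl | h1) (rfl | h2)
  · exact Or.inl rfl
  · exact Or.inl rfl
  · exact Or.inr (Or.inl rfl)
  · exact Or.inr (Or.inr (h1.symm.trans h2))

/-- Compatibility conditions allowing a one-step computation of products:
any same-row (middle) edge of the product graph is isolated. -/
structure MulOK (m m' : PBV n → PBV n) : Prop where
  H1 : ∀ i j : Fin n, m (Sum.inr i) = Sum.inr j → i ≠ j →
        m' (Sum.inl i) = Sum.inl i ∧ m' (Sum.inl j) = Sum.inl j
  H2 : ∀ i j : Fin n, m' (Sum.inl i) = Sum.inl j → i ≠ j →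
        m (Sum.inr i) = Sum.inr i ∧ m (Sum.inr j) = Sum.inr j

/-- The involution of the product diagram. -/
def Mmul (m m' : PBV n → PBV n) : PBV n → PBV n :=
  Sum.elim
    (fun i => Sum.elim (fun j => Sum.inl j)
        (fun j => Sum.elim (fun _ => Sum.inl i) (fun k => Sum.inr k) (m' (Sum.inl j)))
        (m (Sum.inl i)))
    (fun i => Sum.elim
        (fun j => Sum.elim (fun k => Sum.inl k) (fun _ => Sum.inr i) (m (Sum.inr j)))
        (fun j => Sum.inr j)
        (m' (Sum.inr i)))

variable {m m' : PBV n → PBV n}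

lemma Mmul_inl_inl {i j : Fin n} (h : m (Sum.inl i) = Sum.inl j) :
    Mmul m m' (Sum.inl i) = Sum.inl j := by simp [Mmul, h]

lemma Mmul_inl_inr {i j k : Fin n} (h : m (Sum.inl i) = Sum.inr j)
    (h' : m' (Sum.inl j) = Sum.inr k) :
    Mmul m m' (Sum.inl i) = Sum.inr k := by simp [Mmul, h, h']

lemma Mmul_inl_dead {i j k : Fin n} (h : m (Sum.inl i) = Sum.inr j)
    (h' : m' (Sum.inl j) = Sum.inl k) :
    Mmul m m' (Sum.inl i) = Sum.inl i := by simp [Mmul, h, h']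

lemma Mmul_inr_inr {i j : Fin n} (h : m' (Sum.inr i) = Sum.inr j) :
    Mmul m m' (Sum.inr i) = Sum.inr j := by simp [Mmul, h]

lemma Mmul_inr_inl {i j k : Fin n} (h : m' (Sum.inr i) = Sum.inl j)
    (h' : m (Sum.inr j) = Sum.inl k) :
    Mmul m m' (Sum.inr i) = Sum.inl k := by simp [Mmul, h, h']

lemma Mmul_inr_dead {i j k : Fin n} (h : m' (Sum.inr i) = Sum.inl j)
    (h' : m (Sum.inr j) = Sum.inr k) :
    Mmul m m' (Sum.inr i) = Sum.inr i := by simp [Mmul, h, h']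

lemma Mmul_invol (hm : ∀ x, m (m x) = x) (hm' : ∀ x, m' (m' x) = x) :
    ∀ x, Mmul m m' (Mmul m m' x) = x := by
  rintro (i | i)
  · rcases hv : m (Sum.inl i) with j | j
    · rw [Mmul_inl_inl hv]
      have : m (Sum.inl j) = Sum.inl i := by rw [← hv, hm]
      rw [Mmul_inl_inl this]
    · rcases hv' : m' (Sum.inl j) with k | k
      · rw [Mmul_inl_dead hv hv', Mmul_inl_dead hv hv']
      · rw [Mmul_inl_inr hv hv']
        have h1 : m' (Sum.inr k) = Sum.inl j := by rw [← hv', hm']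
        have h2 : m (Sum.inr j) = Sum.inl i := by rw [← hv, hm]
        rw [Mmul_inr_inl h1 h2]
  · rcases hv : m' (Sum.inr i) with j | j
    · rcases hv' : m (Sum.inr j) with k | k
      · rw [Mmul_inr_inl hv hv']
        have h1 : m (Sum.inl k) = Sum.inr j := by rw [← hv', hm]
        have h2 : m' (Sum.inl j) = Sum.inr i := by rw [← hv, hm']
        rw [Mmul_inl_inr h1 h2]
      · rw [Mmul_inr_dead hv hv', Mmul_inr_dead hv hv']
    · rw [Mmul_inr_inr hv]
      have : m' (Sum.inr j) = Sum.inr i := by rw [← hv, hm']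
      rw [Mmul_inr_inr this]

/-- Canonical representative of a connected component of the product graph. -/
def rep (m m' : PBV n → PBV n) : V3 n → V3 n :=
  Sum.elim
    (fun i => Sum.elim (fun j => Sum.inl (min i j)) (fun _ => Sum.inl i) (m (Sum.inl i)))
    (Sum.elim
      (fun j =>
        Sum.elim (fun k => Sum.inl k)
          (fun j2 => if j2 = j then
              Sum.elim (fun k => Sum.inr (Sum.inl (min j k)))
                (fun k => Sum.inr (Sum.inr k)) (m' (Sum.inl j))
            else Sum.inr (Sum.inl (min j j2)))
          (m (Sum.inr j)))
      (fun i =>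
        Sum.elim (fun j => Sum.elim (fun k => Sum.inl k)
            (fun _ => Sum.inr (Sum.inr i)) (m (Sum.inr j)))
          (fun j => Sum.inr (Sum.inr (min i j)))
          (m' (Sum.inr i))))

lemma rep_edge (hm : ∀ x, m (m x) = x) (hm' : ∀ x, m' (m' x) = x) (ok : MulOK m m')
    {hh : ∀ x, m (m x) = x} {hh' : ∀ x, m' (m' x) = x}
    (u v : V3 n) (h : prodEdges (ofMatch m hh) (ofMatch m' hh') u v) :
    rep m m' u = rep m m' v := by
  rcases h with ⟨a, b, (rfl | hab), rfl, rfl⟩ | ⟨a, b, (rfl | hab), rfl, rfl⟩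
  · rfl
  · -- m-edge
    rcases a with i | i <;> rcases b with j | j
    · have h2 : m (Sum.inl j) = Sum.inl i := by rw [← hab, hm]
      simp [rep, topMid, hab, h2, min_comm]
    · have h2 : m (Sum.inr j) = Sum.inl i := by rw [← hab, hm]
      simp [rep, topMid, hab, h2]
    · have h2 : m (Sum.inl j) = Sum.inr i := by rw [← hab, hm]
      simp [rep, topMid, hab, h2]
    · by_cases hij : i = j
      · subst hij; rfl
      · have h2 : m (Sum.inr j) = Sum.inr i := by rw [← hab, hm]
        have hji : ¬ j = i := fun e => hij e.symm
        simp [rep, topMid, hab, h2, hij, hji, min_comm]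
  · rfl
  · -- m'-edge
    rcases a with i | i <;> rcases b with j | j
    · by_cases hij : i = j
      · subst hij; rfl
      · obtain ⟨e1, e2⟩ := ok.H2 i j hab hij
        have h2 : m' (Sum.inl j) = Sum.inl i := by rw [← hab, hm']
        have hji : ¬ j = i := fun e => hij e.symm
        simp [rep, midBot, hab, h2, e1, e2, min_comm]
    · have h2 : m' (Sum.inr j) = Sum.inl i := by rw [← hab, hm']
      rcases hw : m (Sum.inr i) with k | j2
      · simp [rep, midBot, hab, h2, hw]
      · by_cases hj2 : j2 = i
        · subst hj2
          simp [rep, midBot, hab, h2, hw]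
        · obtain ⟨e1, _⟩ := ok.H1 i j2 hw (fun e => hj2 e.symm)
          rw [hab] at e1; exact absurd e1 (by simp)
    · have h2 : m' (Sum.inl j) = Sum.inr i := by rw [← hab, hm']
      rcases hw : m (Sum.inr j) with k | j2
      · simp [rep, midBot, hab, h2, hw]
      · by_cases hj2 : j2 = j
        · subst hj2
          simp [rep, midBot, hab, h2, hw]
        · obtain ⟨e1, _⟩ := ok.H1 j j2 hw (fun e => hj2 e.symm)
          rw [h2] at e1; exact absurd e1 (by simp)
    · have h2 : m' (Sum.inr j) = Sum.inr i := by rw [← hab, hm']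
      simp [rep, midBot, hab, h2, min_comm]

end Dgm
namespace Dgm

variable {n : ℕ} {m m' : PBV n → PBV n}

lemma rep_tb (hm : ∀ x, m (m x) = x) (hm' : ∀ x, m' (m' x) = x)
    (i j : Fin n) (h : rep m m' (topBot (Sum.inl i)) = rep m m' (topBot (Sum.inr j))) :
    Mmul m m' (Sum.inl i) = Sum.inr j := by
  rcases hvi : m (Sum.inl i) with i' | ci
  · rcases hvj : m' (Sum.inr j) with cj | j'
    · rcases hw : m (Sum.inr cj) with k | d <;>
        simp [rep, topBot, hvi, hvj, hw] at h
      exfalso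
      have hk : m (Sum.inl k) = Sum.inr cj := by rw [← hw, hm]
      rcases min_cases i i' with ⟨e1, _⟩ | ⟨e1, _⟩ <;> rw [e1] at h
      · subst h; rw [hvi] at hk; exact absurd hk (by simp)
      · have e3 : m (Sum.inl i') = Sum.inl i := by rw [← hvi, hm]
        rw [h] at e3; rw [e3] at hk; exact absurd hk (by simp)
    · simp [rep, topBot, hvi, hvj] at h
  · rcases hvj : m' (Sum.inr j) with cj | j'
    · rcases hw : m (Sum.inr cj) with k | d <;>
        simp [rep, topBot, hvi, hvj, hw] at h
      subst h
      have hk : m (Sum.inl i) = Sum.inr cj := by rw [← hw, hm]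
      rw [hvi] at hk
      have hcc : ci = cj := by simpa using hk
      subst hcc
      have h1 : m' (Sum.inl ci) = Sum.inr j := by rw [← hvj, hm']
      rw [Mmul_inl_inr hvi h1]
    · simp [rep, topBot, hvi, hvj] at h

lemma rep_topBot (hm : ∀ x, m (m x) = x) (hm' : ∀ x, m' (m' x) = x)
    (x y : PBV n) (h : rep m m' (topBot x) = rep m m' (topBot y)) :
    x = y ∨ Mmul m m' x = y := by
  rcases x with i | i <;> rcases y with j | j
  · -- top-top
    rcases hvi : m (Sum.inl i) with i' | ci <;> rcases hvj : m (Sum.inl j) with j' | cj <;>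
      simp [rep, topBot, hvi, hvj] at h
    · -- both top hooks
      rcases min_cases i i' with ⟨e1, _⟩ | ⟨e1, _⟩ <;> rcases min_cases j j' with ⟨e2, _⟩ | ⟨e2, _⟩ <;>
          rw [e1, e2] at h
      · exact Or.inl (by rw [h])
      · subst h
        have : m (Sum.inl j) = Sum.inl i := by rw [← hvj]
        have h3 : m (Sum.inl i) = Sum.inl j := by rw [← this, hm]
        right; rw [Mmul_inl_inl h3]
      · subst h
        right; rw [Mmul_inl_inl hvi]
      · left
        have e3 : m (Sum.inl i') = Sum.inl i := by rw [← hvi, hm]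
        have e4 : m (Sum.inl j') = Sum.inl j := by rw [← hvj, hm]
        rw [h] at e3; rw [e3] at e4; exact e4.symm ▸ rfl
    · exfalso
      rcases min_cases i i' with ⟨e1, _⟩ | ⟨e1, _⟩ <;> rw [e1] at h
      · subst h; rw [hvi] at hvj; exact absurd hvj (by simp)
      · subst h
        have e3 : m (Sum.inl i') = Sum.inl i := by rw [← hvi, hm]
        rw [e3] at hvj; exact absurd hvj (by simp)
    · exfalso
      rcases min_cases j j' with ⟨e1, _⟩ | ⟨e1, _⟩ <;> rw [e1] at h
      · subst h; rw [hvi] at hvj; exact absurd hvj (by simp)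
      · have e3 : m (Sum.inl j') = Sum.inl j := by rw [← hvj, hm]
        rw [← h] at e3; rw [e3] at hvi; exact absurd hvi (by simp)
    · exact Or.inl (by rw [h])
  · -- top-bottom
    exact Or.inr (rep_tb hm hm' i j h)
  · -- bottom-top : use symmetry
    have h2 := rep_tb hm hm' j i h.symm
    right
    have := congrArg (Mmul m m') h2
    rw [Mmul_invol hm hm'] at this
    exact this.symm
  · -- bottom-bottom
    rcases hvi : m' (Sum.inr i) with ci | i' <;> rcases hvj : m' (Sum.inr j) with cj | j'
    · rcases hwi : m (Sum.inr ci) with k | d <;> rcases hwj : m (Sum.inr cj) with k' | d' <;>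
        simp [rep, topBot, hvi, hvj, hwi, hwj] at h
      · subst h
        have e1 : m (Sum.inl k) = Sum.inr ci := by rw [← hwi, hm]
        have e2 : m (Sum.inl k) = Sum.inr cj := by rw [← hwj, hm]
        rw [e1] at e2
        have : ci = cj := by simpa using e2
        subst this
        have f1 : m' (Sum.inl ci) = Sum.inr i := by rw [← hvi, hm']
        have f2 : m' (Sum.inl ci) = Sum.inr j := by rw [← hvj, hm']
        rw [f1] at f2
        exact Or.inl (by simpa using f2)
      · exact Or.inl (by rw [h])
    · rcases hwi : m (Sum.inr ci) with k | d <;>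
        simp [rep, topBot, hvi, hvj, hwi] at h
      exfalso
      rcases min_cases j j' with ⟨e1, _⟩ | ⟨e1, _⟩ <;> rw [e1] at h
      · subst h; rw [hvi] at hvj; exact absurd hvj (by simp)
      · have e3 : m' (Sum.inr j') = Sum.inr j := by rw [← hvj, hm']
        rw [← h] at e3; rw [e3] at hvi; exact absurd hvi (by simp)
    · rcases hwj : m (Sum.inr cj) with k | d <;>
        simp [rep, topBot, hvi, hvj, hwj] at h
      exfalso
      rcases min_cases i i' with ⟨e1, _⟩ | ⟨e1, _⟩ <;> rw [e1] at h
      · subst h; rw [hvi] at hvj; exact absurd hvj (by simp)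
      · have e3 : m' (Sum.inr i') = Sum.inr i := by rw [← hvi, hm']
        rw [h] at e3; rw [e3] at hvj; exact absurd hvj (by simp)
    · simp [rep, topBot, hvi, hvj] at h
      rcases min_cases i i' with ⟨e1, _⟩ | ⟨e1, _⟩ <;> rcases min_cases j j' with ⟨e2, _⟩ | ⟨e2, _⟩ <;>
          rw [e1, e2] at h
      · exact Or.inl (by rw [h])
      · subst h
        have h3 : m' (Sum.inr i) = Sum.inr j := by rw [← hvj, hm']
        right; rw [Mmul_inr_inr h3]
      · subst h
        right; rw [Mmul_inr_inr hvi]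
      · left
        have e3 : m' (Sum.inr i') = Sum.inr i := by rw [← hvi, hm']
        have e4 : m' (Sum.inr j') = Sum.inr j := by rw [← hvj, hm']
        rw [h] at e3; rw [e3] at e4; exact e4.symm ▸ rfl

end Dgm
namespace Dgm

variable {n : ℕ} {m m' : PBV n → PBV n}

lemma path_of_M {hh : ∀ x, m (m x) = x} {hh' : ∀ x, m' (m' x) = x}
    (x y : PBV n) (h : x = y ∨ Mmul m m' x = y) :
    RGen (prodEdges (ofMatch m hh) (ofMatch m' hh')) (topBot x) (topBot y) := by
  rcases h with rfl | h
  · exact RGen.refl _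
  · subst h
    rcases x with i | i
    · rcases hv : m (Sum.inl i) with j | j
      · rw [Mmul_inl_inl hv]
        exact RGen.rel (Or.inl ⟨Sum.inl i, Sum.inl j, Or.inr hv, rfl, rfl⟩)
      · rcases hv' : m' (Sum.inl j) with k | k
        · rw [Mmul_inl_dead hv hv']
          exact RGen.refl _
        · rw [Mmul_inl_inr hv hv']
          refine RGen.trans (RGen.rel (Or.inl ⟨Sum.inl i, Sum.inr j, Or.inr hv, rfl, rfl⟩)) ?_
          exact RGen.rel (Or.inr ⟨Sum.inl j, Sum.inr k, Or.inr hv', rfl, rfl⟩)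
    · rcases hv : m' (Sum.inr i) with j | j
      · rcases hv' : m (Sum.inr j) with k | k
        · rw [Mmul_inr_inl hv hv']
          refine RGen.trans (RGen.rel (Or.inr ⟨Sum.inr i, Sum.inl j, Or.inr hv, rfl, rfl⟩)) ?_
          exact RGen.rel (Or.inl ⟨Sum.inr j, Sum.inl k, Or.inr hv', rfl, rfl⟩)
        · rw [Mmul_inr_dead hv hv']
          exact RGen.refl _
      · rw [Mmul_inr_inr hv]
        exact RGen.rel (Or.inr ⟨Sum.inr i, Sum.inr j, Or.inr hv, rfl, rfl⟩)

/-- The engine: one-step computation of the product of two diagrams. -/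
theorem pmul_ofMatch (hm : ∀ x, m (m x) = x) (hm' : ∀ x, m' (m' x) = x)
    (ok : MulOK m m') :
    pmul (ofMatch m hm) (ofMatch m' hm') = ofMatch (Mmul m m') (Mmul_invol hm hm') := by
  apply Setoid.ext
  intro x y
  constructor
  · intro h
    have key : ∀ u v : V3 n, RGen (prodEdges (ofMatch m hm) (ofMatch m' hm')) u v →
        rep m m' u = rep m m' v := by
      intro u v huv
      induction huv with
      | rel h => exact rep_edge hm hm' ok _ _ h
      | refl x => rfl
      | symm _ ih => exact ih.symm
      | trans _ _ ih1 ih2 => exact ih1.trans ih2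
    exact rep_topBot hm hm' x y (key _ _ h)
  · intro h
    exact path_of_M x y h

end Dgm
namespace Dgm

variable {n : ℕ}

section MAlpha

variable (α : Dgm n)

/-- The partner function of a diagram with blocks of size ≤ 2. -/
def mAl (x : PBV n) : PBV n :=
  if h : ∃ y, y ≠ x ∧ α.r x y then h.choose else x

variable {α}

lemma mAl_rel (x : PBV n) : α.r x (mAl α x) := by
  unfold mAl
  split
  · next h => exact h.choose_spec.2
  · exact α.iseqv.refl x

lemma mAl_eq (hPB : IsPB α) (x y : PBV n) : α.r x y ↔ x = y ∨ mAl α x = y := by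
  constructor
  · intro h
    by_cases hxy : x = y
    · exact Or.inl hxy
    · right
      have hex : ∃ z, z ≠ x ∧ α.r x z := ⟨y, fun e => hxy e.symm, h⟩
      unfold mAl
      rw [dif_pos hex]
      obtain ⟨hz1, hz2⟩ := hex.choose_spec
      rcases hPB x y hex.choose h hz2 with h1 | h1 | h1
      · exact absurd h1 hxy
      · exact absurd h1.symm hz1
      · exact h1.symm
  · rintro (rfl | rfl)
    · exact α.iseqv.refl x
    · exact mAl_rel x

lemma mAl_invol (hPB : IsPB α) : ∀ x, mAl α (mAl α x) = x := by
  intro x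
  by_cases h : mAl α x = x
  · rw [h, h]
  · have h1 : α.r (mAl α x) x := α.iseqv.symm (mAl_rel x)
    rcases (mAl_eq hPB (mAl α x) x).mp h1 with h2 | h2
    · exact absurd h2 h
    · exact h2

lemma eq_ofMatch (hPB : IsPB α) : α = ofMatch (mAl α) (mAl_invol hPB) :=
  Setoid.ext fun x y => mAl_eq hPB x y

lemma mem_domSet_iff (hPB : IsPB α) (i : Fin n) :
    i ∈ domSet α ↔ ∃ j, mAl α (Sum.inl i) = Sum.inr j := by
  constructor
  · rintro ⟨j, hj⟩
    rcases (mAl_eq hPB _ _).mp hj with h | h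
    · exact absurd h (by simp)
    · exact ⟨j, h⟩
  · rintro ⟨j, hj⟩
    exact ⟨j, (mAl_eq hPB _ _).mpr (Or.inr hj)⟩

lemma mem_codomSet_iff (hPB : IsPB α) (i : Fin n) :
    i ∈ codomSet α ↔ ∃ j, mAl α (Sum.inr i) = Sum.inl j := by
  constructor
  · rintro ⟨j, hj⟩
    rcases (mAl_eq hPB _ _).mp hj with h | h
    · exact absurd h (by simp)
    · exact ⟨j, h⟩
  · rintro ⟨j, hj⟩
    exact ⟨j, (mAl_eq hPB _ _).mpr (Or.inr hj)⟩

/-- The lower partner of an upper point. -/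
def prt (i : Fin n) : Fin n := Sum.elim (fun _ => i) id (mAl α (Sum.inl i))

/-- The upper partner of a lower point. -/
def prt' (j : Fin n) : Fin n := Sum.elim id (fun _ => j) (mAl α (Sum.inr j))

lemma prt_eq {i j : Fin n} (h : mAl α (Sum.inl i) = Sum.inr j) : prt (α := α) i = j := by
  simp [prt, h]

lemma prt'_eq {i j : Fin n} (h : mAl α (Sum.inr j) = Sum.inl i) : prt' (α := α) j = i := by
  simp [prt', h]

lemma dom_spec (hPB : IsPB α) {i : Fin n} (h : i ∈ domSet α) :
    mAl α (Sum.inl i) = Sum.inr (prt (α := α) i) := by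
  obtain ⟨j, hj⟩ := (mem_domSet_iff hPB i).mp h
  rw [hj, prt_eq hj]

lemma codom_spec (hPB : IsPB α) {j : Fin n} (h : j ∈ codomSet α) :
    mAl α (Sum.inr j) = Sum.inl (prt' (α := α) j) := by
  obtain ⟨i, hi⟩ := (mem_codomSet_iff hPB j).mp h
  rw [hi, prt'_eq hi]

lemma prt_mem (hPB : IsPB α) {i : Fin n} (h : i ∈ domSet α) :
    prt (α := α) i ∈ codomSet α := by
  rw [mem_codomSet_iff hPB]
  refine ⟨i, ?_⟩
  rw [← dom_spec hPB h, mAl_invol hPB]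

lemma prt'_mem (hPB : IsPB α) {j : Fin n} (h : j ∈ codomSet α) :
    prt' (α := α) j ∈ domSet α := by
  rw [mem_domSet_iff hPB]
  refine ⟨j, ?_⟩
  rw [← codom_spec hPB h, mAl_invol hPB]

lemma prt'_prt (hPB : IsPB α) {i : Fin n} (h : i ∈ domSet α) :
    prt' (α := α) (prt (α := α) i) = i := by
  apply prt'_eq
  rw [← dom_spec hPB h, mAl_invol hPB]

lemma prt_prt' (hPB : IsPB α) {j : Fin n} (h : j ∈ codomSet α) :
    prt (α := α) (prt' (α := α) j) = j := by
  apply prt_eq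
  rw [← codom_spec hPB h, mAl_invol hPB]

lemma codomSet_eq_image (hPB : IsPB α) :
    codomSet α = (fun i => prt (α := α) i) '' domSet α := by
  ext j
  constructor
  · intro hj
    exact ⟨prt' (α := α) j, prt'_mem hPB hj, prt_prt' hPB hj⟩
  · rintro ⟨i, hi, rfl⟩
    exact prt_mem hPB hi

lemma ncard_codomSet (hPB : IsPB α) : (codomSet α).ncard = (domSet α).ncard := by
  rw [codomSet_eq_image hPB]
  apply Set.ncard_image_of_injOn
  intro a ha b hb hab
  have h1 := dom_spec hPB ha
  have h2 := dom_spec hPB hb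
  have : mAl α (Sum.inl a) = mAl α (Sum.inl b) := by rw [h1, h2]; exact congrArg Sum.inr hab
  have := congrArg (mAl α) this
  rw [mAl_invol hPB, mAl_invol hPB] at this
  exact Sum.inl.inj this

lemma card_domFinset : (domFinset α).card = (domSet α).ncard := by
  rw [Set.ncard_eq_toFinset_card']
  congr 1
  ext i
  simp [domFinset, Set.mem_toFinset]

lemma card_codomFinset : (codomFinset α).card = (codomSet α).ncard := by
  rw [Set.ncard_eq_toFinset_card']
  congr 1
  ext i
  simp [codomFinset, Set.mem_toFinset]

lemma mem_domFinset (i : Fin n) : i ∈ domFinset α ↔ i ∈ domSet α := by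
  simp [domFinset]

lemma mem_codomFinset (i : Fin n) : i ∈ codomFinset α ↔ i ∈ codomSet α := by
  simp [codomFinset]

end MAlpha

end Dgm
namespace Dgm

variable {n : ℕ}

lemma cardLe (A : Finset (Fin n)) : A.card ≤ n := by
  simpa using A.card_le_univ

/-- `k`-th element of `A`. -/
def aEl (A : Finset (Fin n)) (k : Fin A.card) : Fin n := ((A.orderIsoOfFin rfl) k : A)

/-- index of an element of `A`. -/
def aIdx (A : Finset (Fin n)) (a : Fin n) (h : a ∈ A) : Fin A.card :=
  (A.orderIsoOfFin rfl).symm ⟨a, h⟩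

lemma aEl_mem (A : Finset (Fin n)) (k : Fin A.card) : aEl A k ∈ A :=
  ((A.orderIsoOfFin rfl) k).2

lemma aEl_aIdx (A : Finset (Fin n)) (a : Fin n) (h : a ∈ A) : aEl A (aIdx A a h) = a := by
  simp [aEl, aIdx]

lemma aIdx_aEl (A : Finset (Fin n)) (k : Fin A.card) (h : aEl A k ∈ A) :
    aIdx A (aEl A k) h = k := by
  unfold aIdx
  have he : (⟨aEl A k, h⟩ : {x // x ∈ A}) = (A.orderIsoOfFin rfl) k := Subtype.coe_eta _ _
  rw [he]
  exact OrderIso.symm_apply_apply _ _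

lemma aIdx_inj (A : Finset (Fin n)) {a b : Fin n} {ha : a ∈ A} {hb : b ∈ A}
    (h : aIdx A a ha = aIdx A b hb) : a = b := by
  have := congrArg (aEl A) h
  rwa [aEl_aIdx, aEl_aIdx] at this

lemma aEl_inj (A : Finset (Fin n)) {k k' : Fin A.card} (h : aEl A k = aEl A k') : k = k' := by
  have h1 := aIdx_aEl A k (aEl_mem A k)
  have h2 := aIdx_aEl A k' (aEl_mem A k')
  rw [← h1, ← h2]
  congr 1

/-- The matching of `λ_A`. -/
def matchLam (A : Finset (Fin n)) : PBV n → PBV n :=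
  Sum.elim
    (fun a => if h : a ∈ A then Sum.inr (Fin.castLE (cardLe A) (aIdx A a h)) else Sum.inl a)
    (fun j => if h : (j : ℕ) < A.card then Sum.inl (aEl A ⟨(j : ℕ), h⟩) else Sum.inr j)

lemma matchLam_inl_mem {A : Finset (Fin n)} {a : Fin n} (h : a ∈ A) :
    matchLam A (Sum.inl a) = Sum.inr (Fin.castLE (cardLe A) (aIdx A a h)) := by
  simp [matchLam, h]

lemma matchLam_inl_not {A : Finset (Fin n)} {a : Fin n} (h : a ∉ A) :
    matchLam A (Sum.inl a) = Sum.inl a := by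
  simp [matchLam, h]

lemma matchLam_inr_lt {A : Finset (Fin n)} {j : Fin n} (h : (j : ℕ) < A.card) :
    matchLam A (Sum.inr j) = Sum.inl (aEl A ⟨(j : ℕ), h⟩) := by
  simp [matchLam, h]

lemma matchLam_inr_not {A : Finset (Fin n)} {j : Fin n} (h : ¬ (j : ℕ) < A.card) :
    matchLam A (Sum.inr j) = Sum.inr j := by
  simp [matchLam, h]

lemma matchLam_invol (A : Finset (Fin n)) : ∀ x, matchLam A (matchLam A x) = x := by
  rintro (a | j)
  · by_cases h : a ∈ A
    · rw [matchLam_inl_mem h]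
      have hlt : ((Fin.castLE (cardLe A) (aIdx A a h) : Fin n) : ℕ) < A.card := by
        simp [Fin.isLt]
      rw [matchLam_inr_lt hlt]
      congr 1
      have : (⟨((Fin.castLE (cardLe A) (aIdx A a h) : Fin n) : ℕ), hlt⟩ : Fin A.card)
          = aIdx A a h := by
        apply Fin.ext; simp
      rw [this, aEl_aIdx]
    · rw [matchLam_inl_not h, matchLam_inl_not h]
  · by_cases h : (j : ℕ) < A.card
    · rw [matchLam_inr_lt h, matchLam_inl_mem (aEl_mem A ⟨(j : ℕ), h⟩)]
      rw [aIdx_aEl]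
      apply congrArg
      apply Fin.ext
      simp
    · rw [matchLam_inr_not h, matchLam_inr_not h]

lemma ker_r {β : Type*} (f : PBV n → β) (x y : PBV n) :
    (Setoid.ker f).r x y ↔ f x = f y := Iff.rfl

lemma lamd_eq_ofMatch (A : Finset (Fin n)) :
    lamd A = ofMatch (matchLam A) (matchLam_invol A) := by
  apply Setoid.ext
  intro x y
  rw [ofMatch_r]
  unfold lamd
  rw [ker_r]
  rcases x with a | i <;> rcases y with b | j <;> dsimp only
  · by_cases ha : a ∈ A <;> by_cases hb : b ∈ A
    · rw [dif_pos ha, dif_pos hb]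
      constructor
      · intro h
        left
        have hv : ((aIdx A a ha : Fin A.card) : ℕ) = ((aIdx A b hb : Fin A.card) : ℕ) := by
          simpa [aIdx] using h
        exact congrArg Sum.inl (aIdx_inj A (Fin.ext hv))
      · rintro (h | h)
        · obtain rfl : a = b := Sum.inl.inj h; rfl
        · rw [matchLam_inl_mem ha] at h
          exact absurd h (by simp)
    · rw [dif_pos ha, dif_neg hb]
      constructor
      · intro h; exact absurd h (by simp)
      · rintro (h | h)
        · rw [Sum.inl.injEq] at h; subst h; exact absurd ha hb
        · rw [matchLam_inl_mem ha] at h; exact absurd h (by simp)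
    · rw [dif_neg ha, dif_pos hb]
      constructor
      · intro h; exact absurd h (by simp)
      · rintro (h | h)
        · rw [Sum.inl.injEq] at h; subst h; exact absurd hb ha
        · rw [matchLam_inl_not ha] at h
          rw [Sum.inl.injEq] at h; subst h; exact absurd hb ha
    · rw [dif_neg ha, dif_neg hb]
      constructor
      · intro h
        rw [Sum.inl.injEq] at h
        exact Or.inl (congrArg Sum.inl (Fin.ext h))
      · rintro (h | h)
        · obtain rfl : a = b := Sum.inl.inj h; rfl
        · rw [matchLam_inl_not ha] at h
          obtain rfl : a = b := Sum.inl.inj h; rfl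
  · by_cases ha : a ∈ A
    · rw [dif_pos ha]
      constructor
      · intro h
        rw [Sum.inr.injEq] at h
        right
        rw [matchLam_inl_mem ha]
        congr 1
        apply Fin.ext
        simpa [aIdx] using h
      · rintro (h | h)
        · exact absurd h (by simp)
        · rw [matchLam_inl_mem ha] at h
          have hj := Sum.inr.inj h
          rw [Sum.inr.injEq, ← hj]
          simp [aIdx]
    · rw [dif_neg ha]
      constructor
      · intro h; exact absurd h (by simp)
      · rintro (h | h)
        · exact absurd h (by simp)
        · rw [matchLam_inl_not ha] at h; exact absurd h (by simp)
  · by_cases hb : b ∈ A <;> by_cases hi : (i : ℕ) < A.card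
    · rw [dif_pos hb]
      constructor
      · intro h
        rw [Sum.inr.injEq] at h
        right
        rw [matchLam_inr_lt hi]
        rw [Sum.inl.injEq]
        have : (⟨(i : ℕ), hi⟩ : Fin A.card) = aIdx A b hb := by
          apply Fin.ext; simpa [aIdx] using h
        rw [this, aEl_aIdx]
      · rintro (h | h)
        · exact absurd h (by simp)
        · rw [matchLam_inr_lt hi] at h
          rw [Sum.inl.injEq] at h
          rw [Sum.inr.injEq]
          have : aIdx A (aEl A ⟨(i : ℕ), hi⟩) (aEl_mem A _) = ⟨(i : ℕ), hi⟩ :=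
            aIdx_aEl A _ _
          have h2 : aIdx A b hb = ⟨(i : ℕ), hi⟩ := by
            rw [← this]
            congr 1
            exact h.symm
          have h3 : ((A.orderIsoOfFin rfl).symm ⟨b, hb⟩ : Fin A.card) = ⟨(i : ℕ), hi⟩ := h2
          rw [h3]
    · rw [dif_pos hb]
      constructor
      · intro h
        exfalso
        rw [Sum.inr.injEq] at h
        apply hi
        rw [h]
        exact Fin.isLt _
      · rintro (h | h)
        · exact absurd h (by simp)
        · rw [matchLam_inr_not hi] at h; exact absurd h (by simp)
    · rw [dif_neg hb]
      constructor
      · intro h; exact absurd h (by simp)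
      · rintro (h | h)
        · exact absurd h (by simp)
        · rw [matchLam_inr_lt hi] at h
          rw [Sum.inl.injEq] at h
          exact absurd (h ▸ aEl_mem A ⟨(i : ℕ), hi⟩) hb
    · rw [dif_neg hb]
      constructor
      · intro h; exact absurd h (by simp)
      · rintro (h | h)
        · exact absurd h (by simp)
        · rw [matchLam_inr_not hi] at h; exact absurd h (by simp)
  · constructor
    · intro h
      rw [Sum.inr.injEq] at h
      exact Or.inl (congrArg Sum.inr (Fin.ext (by exact_mod_cast h)))
    · rintro (h | h)
      · obtain rfl : i = j := Sum.inr.inj h; rfl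
      · by_cases hi : (i : ℕ) < A.card
        · rw [matchLam_inr_lt hi] at h; exact absurd h (by simp)
        · rw [matchLam_inr_not hi] at h
          obtain rfl : i = j := Sum.inr.inj h; rfl

end Dgm

namespace Dgm
lemma aIdx_congr {n : ℕ} (A : Finset (Fin n)) {a b : Fin n} (h : a = b) (ha : a ∈ A) (hb : b ∈ A) :
    ((aIdx A a ha : Fin A.card) : ℕ) = ((aIdx A b hb : Fin A.card) : ℕ) := by subst h; rfl
end Dgm
namespace Dgm

variable {n : ℕ}

lemma swapUD_invol (x : PBV n) : swapUD (swapUD x) = x := by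
  rcases x with i | i <;> rfl

lemma pstar_ofMatch (m : PBV n → PBV n) (hm : ∀ x, m (m x) = x) :
    pstar (ofMatch m hm) = ofMatch (fun x => swapUD (m (swapUD x)))
      (fun x => by simp [swapUD_invol, hm]) := by
  apply Setoid.ext
  intro x y
  show (ofMatch m hm).r (swapUD x) (swapUD y) ↔ _
  rw [ofMatch_r, ofMatch_r]
  constructor
  · rintro (h | h)
    · left
      have := congrArg swapUD h
      rwa [swapUD_invol, swapUD_invol] at this
    · right
      rw [h, swapUD_invol]
  · rintro (rfl | rfl)
    · exact Or.inl rfl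
    · right
      rw [swapUD_invol]

/-- The matching of an element of `S_{[r]}`. -/
def matchPerm (r : ℕ) (hr : r ≤ n) (π : Equiv.Perm (Fin r)) : PBV n → PBV n :=
  Sum.elim
    (fun a => if h : (a : ℕ) < r then Sum.inr (Fin.castLE hr (π ⟨(a : ℕ), h⟩)) else Sum.inl a)
    (fun j => if h : (j : ℕ) < r then Sum.inl (Fin.castLE hr (π.symm ⟨(j : ℕ), h⟩)) else Sum.inr j)

variable {r : ℕ} {hr : r ≤ n} {π : Equiv.Perm (Fin r)}

lemma matchPerm_inl_lt {a : Fin n} (h : (a : ℕ) < r) :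
    matchPerm r hr π (Sum.inl a) = Sum.inr (Fin.castLE hr (π ⟨(a : ℕ), h⟩)) := by
  simp [matchPerm, h]

lemma matchPerm_inl_not {a : Fin n} (h : ¬ (a : ℕ) < r) :
    matchPerm r hr π (Sum.inl a) = Sum.inl a := by
  simp [matchPerm, h]

lemma matchPerm_inr_lt {j : Fin n} (h : (j : ℕ) < r) :
    matchPerm r hr π (Sum.inr j) = Sum.inl (Fin.castLE hr (π.symm ⟨(j : ℕ), h⟩)) := by
  simp [matchPerm, h]

lemma matchPerm_inr_not {j : Fin n} (h : ¬ (j : ℕ) < r) :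
    matchPerm r hr π (Sum.inr j) = Sum.inr j := by
  simp [matchPerm, h]

lemma matchPerm_invol : ∀ x, matchPerm r hr π (matchPerm r hr π x) = x := by
  rintro (a | j)
  · by_cases h : (a : ℕ) < r
    · rw [matchPerm_inl_lt h]
      have h2 : ((Fin.castLE hr (π ⟨(a : ℕ), h⟩) : Fin n) : ℕ) < r := by simp
      rw [matchPerm_inr_lt h2]
      congr 1
      apply Fin.ext
      have : (⟨((Fin.castLE hr (π ⟨(a : ℕ), h⟩) : Fin n) : ℕ), h2⟩ : Fin r) = π ⟨(a : ℕ), h⟩ := by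
        apply Fin.ext; simp
      rw [this]
      simp
    · rw [matchPerm_inl_not h, matchPerm_inl_not h]
  · by_cases h : (j : ℕ) < r
    · rw [matchPerm_inr_lt h]
      have h2 : ((Fin.castLE hr (π.symm ⟨(j : ℕ), h⟩) : Fin n) : ℕ) < r := by simp
      rw [matchPerm_inl_lt h2]
      congr 1
      apply Fin.ext
      have : (⟨((Fin.castLE hr (π.symm ⟨(j : ℕ), h⟩) : Fin n) : ℕ), h2⟩ : Fin r)
          = π.symm ⟨(j : ℕ), h⟩ := by
        apply Fin.ext; simp
      rw [this]
      simp
    · rw [matchPerm_inr_not h, matchPerm_inr_not h]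

lemma permDgm_eq_ofMatch (hr : r ≤ n) (π : Equiv.Perm (Fin r)) :
    permDgm n r π = ofMatch (matchPerm r hr π) matchPerm_invol := by
  apply Setoid.ext
  intro x y
  rw [ofMatch_r]
  unfold permDgm
  rw [ker_r]
  rcases x with a | i <;> rcases y with b | j <;> dsimp only
  · by_cases ha : (a : ℕ) < r <;> by_cases hb : (b : ℕ) < r
    · rw [dif_pos ha, dif_pos hb]
      constructor
      · intro h
        rw [Sum.inr.injEq] at h
        left
        have : π ⟨(a : ℕ), ha⟩ = π ⟨(b : ℕ), hb⟩ := Fin.ext h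
        have h5 := π.injective this
        have hv : (a : ℕ) = (b : ℕ) := by
          have h6 := congrArg Fin.val h5
          simpa using h6
        exact congrArg Sum.inl (Fin.ext hv)
      · rintro (h | h)
        · obtain rfl : a = b := Sum.inl.inj h; rfl
        · rw [matchPerm_inl_lt ha] at h
          exact absurd h (by simp)
    · rw [dif_pos ha, dif_neg hb]
      constructor
      · intro h; exact absurd h (by simp)
      · rintro (h | h)
        · obtain rfl : a = b := Sum.inl.inj h; exact absurd ha hb
        · rw [matchPerm_inl_lt ha] at h; exact absurd h (by simp)
    · rw [dif_neg ha, dif_pos hb]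
      constructor
      · intro h; exact absurd h (by simp)
      · rintro (h | h)
        · obtain rfl : a = b := Sum.inl.inj h; exact absurd hb ha
        · rw [matchPerm_inl_not ha] at h
          obtain rfl : a = b := Sum.inl.inj h; exact absurd hb ha
    · rw [dif_neg ha, dif_neg hb]
      constructor
      · intro h
        rw [Sum.inl.injEq] at h
        exact Or.inl (congrArg Sum.inl (Fin.ext h))
      · rintro (h | h)
        · obtain rfl : a = b := Sum.inl.inj h; rfl
        · rw [matchPerm_inl_not ha] at h
          obtain rfl : a = b := Sum.inl.inj h; rfl
  · by_cases ha : (a : ℕ) < r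
    · rw [dif_pos ha]
      constructor
      · intro h
        rw [Sum.inr.injEq] at h
        right
        rw [matchPerm_inl_lt ha]
        congr 1
        apply Fin.ext
        simpa using h
      · rintro (h | h)
        · exact absurd h (by simp)
        · rw [matchPerm_inl_lt ha] at h
          have hj := Sum.inr.inj h
          rw [Sum.inr.injEq, ← hj]
          simp
    · rw [dif_neg ha]
      constructor
      · intro h; exact absurd h (by simp)
      · rintro (h | h)
        · exact absurd h (by simp)
        · rw [matchPerm_inl_not ha] at h; exact absurd h (by simp)
  · by_cases hb : (b : ℕ) < r <;> by_cases hi : (i : ℕ) < r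
    · rw [dif_pos hb]
      constructor
      · intro h
        rw [Sum.inr.injEq] at h
        right
        rw [matchPerm_inr_lt hi]
        rw [Sum.inl.injEq]
        have hfix : (⟨(i : ℕ), hi⟩ : Fin r) = π ⟨(b : ℕ), hb⟩ := Fin.ext h
        rw [hfix, Equiv.symm_apply_apply]
        apply Fin.ext
        simp
      · rintro (h | h)
        · exact absurd h (by simp)
        · rw [matchPerm_inr_lt hi] at h
          have hb2 := Sum.inl.inj h
          rw [Sum.inr.injEq]
          have hfix : π.symm ⟨(i : ℕ), hi⟩ = ⟨(b : ℕ), hb⟩ := by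
            apply Fin.ext
            have := congrArg Fin.val hb2
            simpa using this
          have h4 := congrArg π hfix
          rw [Equiv.apply_symm_apply] at h4
          rw [← h4]
    · rw [dif_pos hb]
      constructor
      · intro h
        exfalso
        rw [Sum.inr.injEq] at h
        apply hi
        rw [h]
        exact Fin.isLt _
      · rintro (h | h)
        · exact absurd h (by simp)
        · rw [matchPerm_inr_not hi] at h; exact absurd h (by simp)
    · rw [dif_neg hb]
      constructor
      · intro h; exact absurd h (by simp)
      · rintro (h | h)
        · exact absurd h (by simp)
        · rw [matchPerm_inr_lt hi] at h
          have hb2 := Sum.inl.inj h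
          exfalso
          apply hb
          have hv : (b : ℕ) = ((π.symm ⟨(i : ℕ), hi⟩ : Fin r) : ℕ) := by
            rw [← hb2]; simp
          rw [hv]
          exact Fin.isLt _
    · rw [dif_neg hb]
      constructor
      · intro h; exact absurd h (by simp)
      · rintro (h | h)
        · exact absurd h (by simp)
        · rw [matchPerm_inr_not hi] at h; exact absurd h (by simp)
  · constructor
    · intro h
      rw [Sum.inr.injEq] at h
      exact Or.inl (congrArg Sum.inr (Fin.ext h))
    · rintro (h | h)
      · obtain rfl : i = j := Sum.inr.inj h; rfl
      · by_cases hi : (i : ℕ) < r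
        · rw [matchPerm_inr_lt hi] at h; exact absurd h (by simp)
        · rw [matchPerm_inr_not hi] at h
          obtain rfl : i = j := Sum.inr.inj h; rfl

end Dgm
namespace Dgm

variable {n : ℕ} {α : Dgm n}

/-- The matching of the left idempotent `β`. -/
def mBeta (α : Dgm n) : PBV n → PBV n :=
  Sum.elim (fun i => if i ∈ domSet α then Sum.inr i else mAl α (Sum.inl i))
    (fun i => if i ∈ domSet α then Sum.inl i else Sum.inr i)

/-- The matching of the right idempotent `δ`. -/
def mDelta (α : Dgm n) : PBV n → PBV n :=
  Sum.elim (fun i => if i ∈ codomSet α then Sum.inr i else Sum.inl i)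
    (fun i => if i ∈ codomSet α then Sum.inl i else mAl α (Sum.inr i))

lemma mBeta_inl_mem {i : Fin n} (h : i ∈ domSet α) : mBeta α (Sum.inl i) = Sum.inr i := by
  simp [mBeta, h]

lemma mBeta_inl_not {i : Fin n} (h : i ∉ domSet α) :
    mBeta α (Sum.inl i) = mAl α (Sum.inl i) := by
  simp [mBeta, h]

lemma mBeta_inr_mem {i : Fin n} (h : i ∈ domSet α) : mBeta α (Sum.inr i) = Sum.inl i := by
  simp [mBeta, h]

lemma mBeta_inr_not {i : Fin n} (h : i ∉ domSet α) : mBeta α (Sum.inr i) = Sum.inr i := by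
  simp [mBeta, h]

lemma mDelta_inl_mem {i : Fin n} (h : i ∈ codomSet α) : mDelta α (Sum.inl i) = Sum.inr i := by
  simp [mDelta, h]

lemma mDelta_inl_not {i : Fin n} (h : i ∉ codomSet α) : mDelta α (Sum.inl i) = Sum.inl i := by
  simp [mDelta, h]

lemma mDelta_inr_mem {i : Fin n} (h : i ∈ codomSet α) : mDelta α (Sum.inr i) = Sum.inl i := by
  simp [mDelta, h]

lemma mDelta_inr_not {i : Fin n} (h : i ∉ codomSet α) :
    mDelta α (Sum.inr i) = mAl α (Sum.inr i) := by
  simp [mDelta, h]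

lemma mAl_inl_top (hPB : IsPB α) {i : Fin n} (h : i ∉ domSet α) :
    ∃ j, mAl α (Sum.inl i) = Sum.inl j ∧ j ∉ domSet α := by
  rcases hv : mAl α (Sum.inl i) with j | j
  · refine ⟨j, rfl, ?_⟩
    intro hj
    obtain ⟨k, hk⟩ := (mem_domSet_iff hPB j).mp hj
    have : mAl α (Sum.inl j) = Sum.inl i := by rw [← hv, mAl_invol hPB]
    rw [this] at hk
    exact absurd hk (by simp)
  · exact absurd ((mem_domSet_iff hPB i).mpr ⟨j, hv⟩) h

lemma mAl_inr_bot (hPB : IsPB α) {i : Fin n} (h : i ∉ codomSet α) :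
    ∃ j, mAl α (Sum.inr i) = Sum.inr j ∧ j ∉ codomSet α := by
  rcases hv : mAl α (Sum.inr i) with j | j
  · exact absurd ((mem_codomSet_iff hPB i).mpr ⟨j, hv⟩) h
  · refine ⟨j, rfl, ?_⟩
    intro hj
    obtain ⟨k, hk⟩ := (mem_codomSet_iff hPB j).mp hj
    have : mAl α (Sum.inr j) = Sum.inr i := by rw [← hv, mAl_invol hPB]
    rw [this] at hk
    exact absurd hk (by simp)

lemma mBeta_invol (hPB : IsPB α) : ∀ x, mBeta α (mBeta α x) = x := by
  rintro (i | i)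
  · by_cases h : i ∈ domSet α
    · rw [mBeta_inl_mem h, mBeta_inr_mem h]
    · obtain ⟨j, hj, hj2⟩ := mAl_inl_top hPB h
      rw [mBeta_inl_not h, hj, mBeta_inl_not hj2, ← hj, mAl_invol hPB]
  · by_cases h : i ∈ domSet α
    · rw [mBeta_inr_mem h, mBeta_inl_mem h]
    · rw [mBeta_inr_not h, mBeta_inr_not h]

lemma mDelta_invol (hPB : IsPB α) : ∀ x, mDelta α (mDelta α x) = x := by
  rintro (i | i)
  · by_cases h : i ∈ codomSet α
    · rw [mDelta_inl_mem h, mDelta_inr_mem h]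
    · rw [mDelta_inl_not h, mDelta_inl_not h]
  · by_cases h : i ∈ codomSet α
    · rw [mDelta_inr_mem h, mDelta_inl_mem h]
    · obtain ⟨j, hj, hj2⟩ := mAl_inr_bot hPB h
      rw [mDelta_inr_not h, hj, mDelta_inr_not hj2, ← hj, mAl_invol hPB]

lemma okBB (hPB : IsPB α) : MulOK (mBeta α) (mBeta α) := by
  constructor
  · intro i j h hne
    exfalso
    by_cases hd : i ∈ domSet α
    · rw [mBeta_inr_mem hd] at h; exact absurd h (by simp)
    · rw [mBeta_inr_not hd] at h
      exact hne (Sum.inr.inj h)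
  · intro i j h hne
    by_cases hd : i ∈ domSet α
    · rw [mBeta_inl_mem hd] at h; exact absurd h (by simp)
    · obtain ⟨k, hk, hk2⟩ := mAl_inl_top hPB hd
      rw [mBeta_inl_not hd, hk] at h
      obtain rfl : k = j := Sum.inl.inj h
      rw [mBeta_inr_not hd, mBeta_inr_not hk2]
      exact ⟨rfl, rfl⟩

lemma okDD (hPB : IsPB α) : MulOK (mDelta α) (mDelta α) := by
  constructor
  · intro i j h hne
    by_cases hd : i ∈ codomSet α
    · rw [mDelta_inr_mem hd] at h; exact absurd h (by simp)
    · obtain ⟨k, hk, hk2⟩ := mAl_inr_bot hPB hd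
      rw [mDelta_inr_not hd, hk] at h
      obtain rfl : k = j := Sum.inr.inj h
      rw [mDelta_inl_not hd, mDelta_inl_not hk2]
      exact ⟨rfl, rfl⟩
  · intro i j h hne
    exfalso
    by_cases hd : i ∈ codomSet α
    · rw [mDelta_inl_mem hd] at h; exact absurd h (by simp)
    · rw [mDelta_inl_not hd] at h
      exact hne (Sum.inl.inj h)

lemma beta_idem (hPB : IsPB α) : IsIdpt (ofMatch (mBeta α) (mBeta_invol hPB)) := by
  unfold IsIdpt
  rw [pmul_ofMatch (mBeta_invol hPB) (mBeta_invol hPB) (okBB hPB)]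
  apply ofMatch_ext
  rintro (i | i)
  · by_cases h : i ∈ domSet α
    · rw [Mmul_inl_inr (mBeta_inl_mem h) (mBeta_inl_mem h), mBeta_inl_mem h]
    · obtain ⟨j, hj, _⟩ := mAl_inl_top hPB h
      have h1 : mBeta α (Sum.inl i) = Sum.inl j := by rw [mBeta_inl_not h, hj]
      rw [Mmul_inl_inl h1, h1]
  · by_cases h : i ∈ domSet α
    · rw [Mmul_inr_inl (mBeta_inr_mem h) (mBeta_inr_mem h), mBeta_inr_mem h]
    · rw [Mmul_inr_inr (mBeta_inr_not h), mBeta_inr_not h]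

lemma delta_idem (hPB : IsPB α) : IsIdpt (ofMatch (mDelta α) (mDelta_invol hPB)) := by
  unfold IsIdpt
  rw [pmul_ofMatch (mDelta_invol hPB) (mDelta_invol hPB) (okDD hPB)]
  apply ofMatch_ext
  rintro (i | i)
  · by_cases h : i ∈ codomSet α
    · rw [Mmul_inl_inr (mDelta_inl_mem h) (mDelta_inl_mem h), mDelta_inl_mem h]
    · rw [Mmul_inl_inl (mDelta_inl_not h), mDelta_inl_not h]
  · by_cases h : i ∈ codomSet α
    · rw [Mmul_inr_inl (mDelta_inr_mem h) (mDelta_inr_mem h), mDelta_inr_mem h]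
    · obtain ⟨j, hj, _⟩ := mAl_inr_bot hPB h
      have h1 : mDelta α (Sum.inr i) = Sum.inr j := by rw [mDelta_inr_not h, hj]
      rw [Mmul_inr_inr h1, h1]

lemma domSet_beta (hPB : IsPB α) :
    domSet (ofMatch (mBeta α) (mBeta_invol hPB)) = domSet α := by
  ext i
  constructor
  · rintro ⟨j, hj⟩
    rcases hj with hj | hj
    · exact absurd hj (by simp)
    · by_cases h : i ∈ domSet α
      · exact h
      · obtain ⟨k, hk, _⟩ := mAl_inl_top hPB h
        rw [mBeta_inl_not h, hk] at hj
        exact absurd hj (by simp)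
  · intro h
    exact ⟨i, Or.inr (mBeta_inl_mem h)⟩

lemma domSet_delta (hPB : IsPB α) :
    domSet (ofMatch (mDelta α) (mDelta_invol hPB)) = codomSet α := by
  ext i
  constructor
  · rintro ⟨j, hj⟩
    rcases hj with hj | hj
    · exact absurd hj (by simp)
    · by_cases h : i ∈ codomSet α
      · exact h
      · rw [mDelta_inl_not h] at hj
        exact absurd hj (by simp)
  · intro h
    exact ⟨i, Or.inr (mDelta_inl_mem h)⟩

end Dgm

/-- Normal forms in `PB_n`: every `α ∈ D_r(PB_n)` factors as
`α = β · λ_{dom α} · γ · ρ_{codom α} · δ` with `β, δ ∈ E(D_r(PB_n))` and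
`γ ∈ S_{[r]}`. -/
theorem normal_form_PB (n r : ℕ) (α : Dgm n) (hα : α ∈ DPB n r) :
    ∃ β δ γ : Dgm n,
      β ∈ DPB n r ∧ IsIdpt β ∧
      δ ∈ DPB n r ∧ IsIdpt δ ∧
      γ ∈ SBr n r ∧
      α = pmul (pmul (pmul (pmul β (lamd (domFinset α))) γ) (rhod (codomFinset α))) δ := by
  obtain ⟨hPB, hrank⟩ := hα
  have hA : (domFinset α).card = r := by rw [card_domFinset]; exact hrank
  have hBA : (codomFinset α).card = (domFinset α).card := by
    rw [card_codomFinset, card_domFinset, ncard_codomSet hPB]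
  have hrn : r ≤ n := hA ▸ cardLe (domFinset α)
  set A := domFinset α with hAdef
  set B := codomFinset α with hBdef
  -- membership transfers
  have memA : ∀ i : Fin n, i ∈ A ↔ i ∈ domSet α := fun i => mem_domFinset (α := α) i
  have memB : ∀ i : Fin n, i ∈ B ↔ i ∈ codomSet α := fun i => mem_codomFinset (α := α) i
  have hmemB : ∀ k : Fin A.card, prt (α := α) (aEl A k) ∈ B := fun k => by
    rw [memB]
    exact prt_mem hPB ((memA _).mp (aEl_mem A k))
  -- the permutation
  have prtInj : ∀ a b : Fin n, a ∈ domSet α → b ∈ domSet α →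
      prt (α := α) a = prt (α := α) b → a = b := by
    intro a b ha hb hab
    have h1 := dom_spec hPB ha
    have h2 := dom_spec hPB hb
    have h3 : mAl α (Sum.inl a) = mAl α (Sum.inl b) := by rw [h1, h2, hab]
    have h4 := congrArg (mAl α) h3
    rw [mAl_invol hPB, mAl_invol hPB] at h4
    exact Sum.inl.inj h4
  let f : Fin r → Fin r := fun k =>
    Fin.cast (hBA.trans hA)
      (aIdx B (prt (α := α) (aEl A (Fin.cast hA.symm k))) (hmemB _))
  have hfinj : Function.Injective f := by
    intro k1 k2 h
    have hval := congrArg Fin.val h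
    simp only [f, Fin.coe_cast] at hval
    have h2 : aIdx B (prt (α := α) (aEl A (Fin.cast hA.symm k1))) (hmemB _)
        = aIdx B (prt (α := α) (aEl A (Fin.cast hA.symm k2))) (hmemB _) := Fin.ext hval
    have h3 := aIdx_inj B h2
    have h4 := prtInj _ _ ((memA _).mp (aEl_mem A _)) ((memA _).mp (aEl_mem A _)) h3
    have h5 := aEl_inj A h4
    have h6 := congrArg Fin.val h5
    simp only [Fin.coe_cast] at h6
    exact Fin.ext h6
  let π : Equiv.Perm (Fin r) := Equiv.ofBijective f (Finite.injective_iff_bijective.mp hfinj)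
  have hπ : ∀ k, π k = f k := fun k => rfl
  -- matchings
  have hmβ := mBeta_invol (α := α) hPB
  have hmδ := mDelta_invol (α := α) hPB
  -- ok conditions
  have ok1 : MulOK (mBeta α) (matchLam A) := by
    constructor
    · intro i j h hne
      exfalso
      by_cases hd : i ∈ domSet α
      · rw [mBeta_inr_mem hd] at h; exact absurd h (by simp)
      · rw [mBeta_inr_not hd] at h; exact hne (Sum.inr.inj h)
    · intro i j h hne
      exfalso
      by_cases hd : i ∈ A
      · rw [matchLam_inl_mem hd] at h; exact absurd h (by simp)
      · rw [matchLam_inl_not hd] at h; exact hne (Sum.inl.inj h)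
  -- M1 value lemmas
  have M1_inl_mem : ∀ (i : Fin n) (h : i ∈ domSet α),
      Mmul (mBeta α) (matchLam A) (Sum.inl i)
        = Sum.inr (Fin.castLE (cardLe A) (aIdx A i ((memA i).mpr h))) := by
    intro i h
    exact Mmul_inl_inr (mBeta_inl_mem h) (matchLam_inl_mem ((memA i).mpr h))
  have M1_inl_not : ∀ (i j : Fin n), i ∉ domSet α → mAl α (Sum.inl i) = Sum.inl j →
      Mmul (mBeta α) (matchLam A) (Sum.inl i) = Sum.inl j := by
    intro i j h hj
    exact Mmul_inl_inl (by rw [mBeta_inl_not h, hj])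
  have M1_inr_lt : ∀ (j : Fin n) (h : (j : ℕ) < A.card),
      Mmul (mBeta α) (matchLam A) (Sum.inr j) = Sum.inl (aEl A ⟨(j : ℕ), h⟩) := by
    intro j h
    exact Mmul_inr_inl (matchLam_inr_lt h)
      (mBeta_inr_mem ((memA _).mp (aEl_mem A ⟨(j : ℕ), h⟩)))
  have M1_inr_not : ∀ (j : Fin n), ¬ (j : ℕ) < A.card →
      Mmul (mBeta α) (matchLam A) (Sum.inr j) = Sum.inr j := by
    intro j h
    exact Mmul_inr_inr (matchLam_inr_not h)
  set m1 := Mmul (mBeta α) (matchLam A) with hm1def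
  have ok2 : MulOK m1 (matchPerm r hrn π) := by
    constructor
    · intro i j h hne
      exfalso
      by_cases hi : (i : ℕ) < A.card
      · rw [M1_inr_lt i hi] at h; exact absurd h (by simp)
      · rw [M1_inr_not i hi] at h; exact hne (Sum.inr.inj h)
    · intro i j h hne
      exfalso
      by_cases hi : (i : ℕ) < r
      · rw [matchPerm_inl_lt hi] at h; exact absurd h (by simp)
      · rw [matchPerm_inl_not hi] at h; exact hne (Sum.inl.inj h)
  -- M2 value lemmas
  set m2 := Mmul m1 (matchPerm r hrn π) with hm2def
  have M2_inl_mem : ∀ (i : Fin n) (h : i ∈ domSet α),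
      m2 (Sum.inl i)
        = Sum.inr (Fin.castLE hrn (π (Fin.cast hA (aIdx A i ((memA i).mpr h))))) := by
    intro i h
    have h2 : ((Fin.castLE (cardLe A) (aIdx A i ((memA i).mpr h)) : Fin n) : ℕ) < r := by
      rw [← hA]; simp
    refine (Mmul_inl_inr (M1_inl_mem i h) (matchPerm_inl_lt h2)).trans ?_
    have he : (⟨((Fin.castLE (cardLe A) (aIdx A i ((memA i).mpr h)) : Fin n) : ℕ), h2⟩ : Fin r)
        = Fin.cast hA (aIdx A i ((memA i).mpr h)) := Fin.ext (by simp)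
    rw [he]
  have M2_inl_not : ∀ (i j : Fin n), i ∉ domSet α → mAl α (Sum.inl i) = Sum.inl j →
      m2 (Sum.inl i) = Sum.inl j := by
    intro i j h hj
    exact Mmul_inl_inl (M1_inl_not i j h hj)
  have M2_inr_lt : ∀ (j : Fin n) (h : (j : ℕ) < r),
      m2 (Sum.inr j) = Sum.inl (aEl A (Fin.cast hA.symm (π.symm ⟨(j : ℕ), h⟩))) := by
    intro j h
    have h2 : ((Fin.castLE hrn (π.symm ⟨(j : ℕ), h⟩) : Fin n) : ℕ) < A.card := by
      rw [hA]; simp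
    refine (Mmul_inr_inl (matchPerm_inr_lt h) (M1_inr_lt _ h2)).trans ?_
    have he : (⟨((Fin.castLE hrn (π.symm ⟨(j : ℕ), h⟩) : Fin n) : ℕ), h2⟩ : Fin A.card)
        = Fin.cast hA.symm (π.symm ⟨(j : ℕ), h⟩) := Fin.ext (by simp)
    rw [he]
  have M2_inr_not : ∀ (j : Fin n), ¬ (j : ℕ) < r → m2 (Sum.inr j) = Sum.inr j := by
    intro j h
    exact Mmul_inr_inr (matchPerm_inr_not h)
  -- rho matching
  set mρ : PBV n → PBV n := fun x => swapUD (matchLam B (swapUD x)) with hmρdef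
  have hmρ : ∀ x, mρ (mρ x) = x := fun x => by
    simp [hmρdef, swapUD_invol, matchLam_invol]
  have mρ_inl_lt : ∀ (i : Fin n) (h : (i : ℕ) < B.card),
      mρ (Sum.inl i) = Sum.inr (aEl B ⟨(i : ℕ), h⟩) := by
    intro i h
    show swapUD (matchLam B (swapUD (Sum.inl i))) = _
    rw [show swapUD (Sum.inl i) = (Sum.inr i : PBV n) from rfl, matchLam_inr_lt h]
    rfl
  have mρ_inl_not : ∀ (i : Fin n), ¬ (i : ℕ) < B.card → mρ (Sum.inl i) = Sum.inl i := by
    intro i h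
    show swapUD (matchLam B (swapUD (Sum.inl i))) = _
    rw [show swapUD (Sum.inl i) = (Sum.inr i : PBV n) from rfl, matchLam_inr_not h]
    rfl
  have mρ_inr_mem : ∀ (i : Fin n) (h : i ∈ B),
      mρ (Sum.inr i) = Sum.inl (Fin.castLE (cardLe B) (aIdx B i h)) := by
    intro i h
    show swapUD (matchLam B (swapUD (Sum.inr i))) = _
    rw [show swapUD (Sum.inr i) = (Sum.inl i : PBV n) from rfl, matchLam_inl_mem h]
    rfl
  have mρ_inr_not : ∀ (i : Fin n), i ∉ B → mρ (Sum.inr i) = Sum.inr i := by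
    intro i h
    show swapUD (matchLam B (swapUD (Sum.inr i))) = _
    rw [show swapUD (Sum.inr i) = (Sum.inl i : PBV n) from rfl, matchLam_inl_not h]
    rfl
  have ok3 : MulOK m2 mρ := by
    constructor
    · intro i j h hne
      exfalso
      by_cases hi : (i : ℕ) < r
      · rw [M2_inr_lt i hi] at h; exact absurd h (by simp)
      · rw [M2_inr_not i hi] at h; exact hne (Sum.inr.inj h)
    · intro i j h hne
      exfalso
      by_cases hi : (i : ℕ) < B.card
      · rw [mρ_inl_lt i hi] at h; exact absurd h (by simp)
      · rw [mρ_inl_not i hi] at h; exact hne (Sum.inl.inj h)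
  set m3 := Mmul m2 mρ with hm3def
  -- M3 value lemmas
  have M3_inl : ∀ i : Fin n, m3 (Sum.inl i) = mAl α (Sum.inl i) := by
    intro i
    by_cases h : i ∈ domSet α
    · have hs : ((Fin.castLE hrn (π (Fin.cast hA (aIdx A i ((memA i).mpr h)))) : Fin n) : ℕ)
          < B.card := by
        have h0 : ((Fin.castLE hrn (π (Fin.cast hA (aIdx A i ((memA i).mpr h)))) : Fin n) : ℕ)
            < r := by
          simpa using (π (Fin.cast hA (aIdx A i ((memA i).mpr h)))).isLt
        omega
      have step : m3 (Sum.inl i) = Sum.inr (aEl B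
          ⟨((Fin.castLE hrn (π (Fin.cast hA (aIdx A i ((memA i).mpr h)))) : Fin n) : ℕ), hs⟩) :=
        Mmul_inl_inr (M2_inl_mem i h) (mρ_inl_lt _ hs)
      refine step.trans ?_
      rw [dom_spec hPB h]
      congr 1
      have hpm : prt (α := α) i ∈ B := by rw [memB]; exact prt_mem hPB h
      have hcast : Fin.cast hA.symm (Fin.cast hA (aIdx A i ((memA i).mpr h)))
          = aIdx A i ((memA i).mpr h) := Fin.ext (by simp)
      have hval : ((Fin.castLE hrn (π (Fin.cast hA (aIdx A i ((memA i).mpr h)))) : Fin n) : ℕ)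
          = ((aIdx B (prt (α := α) i) hpm : Fin B.card) : ℕ) := by
        calc ((Fin.castLE hrn (π (Fin.cast hA (aIdx A i ((memA i).mpr h)))) : Fin n) : ℕ)
            = ((π (Fin.cast hA (aIdx A i ((memA i).mpr h))) : Fin r) : ℕ) := by simp
          _ = ((f (Fin.cast hA (aIdx A i ((memA i).mpr h))) : Fin r) : ℕ) := by rw [hπ]
          _ = ((aIdx B (prt (α := α)
                (aEl A (Fin.cast hA.symm (Fin.cast hA (aIdx A i ((memA i).mpr h))))))
                (hmemB _) : Fin B.card) : ℕ) := by simp [f]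
          _ = ((aIdx B (prt (α := α) i) hpm : Fin B.card) : ℕ) := by
                apply aIdx_congr
                exact congrArg (fun t => prt (α := α) t) (by rw [hcast, aEl_aIdx])
      have hfin : (⟨((Fin.castLE hrn (π (Fin.cast hA (aIdx A i ((memA i).mpr h)))) : Fin n) : ℕ),
            hs⟩ : Fin B.card) = aIdx B (prt (α := α) i) hpm := Fin.ext hval
      rw [hfin, aEl_aIdx]
    · obtain ⟨j, hj, _⟩ := mAl_inl_top hPB h
      have step : m3 (Sum.inl i) = Sum.inl j := Mmul_inl_inl (M2_inl_not i j h hj)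
      exact step.trans hj.symm
  have M3_inr_mem : ∀ (j : Fin n), j ∈ codomSet α →
      m3 (Sum.inr j) = Sum.inl (prt' (α := α) j) := by
    intro j h
    have hjB : j ∈ B := (memB j).mpr h
    have ht : ((Fin.castLE (cardLe B) (aIdx B j hjB) : Fin n) : ℕ) < r := by
      have h0 : ((Fin.castLE (cardLe B) (aIdx B j hjB) : Fin n) : ℕ) < B.card := by
        simpa using (aIdx B j hjB).isLt
      omega
    have hprtA : prt' (α := α) j ∈ A := (memA _).mpr (prt'_mem hPB h)
    have step : m3 (Sum.inr j) = Sum.inl (aEl A (Fin.cast hA.symm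
        (π.symm ⟨((Fin.castLE (cardLe B) (aIdx B j hjB) : Fin n) : ℕ), ht⟩))) :=
      Mmul_inr_inl (mρ_inr_mem j hjB) (M2_inr_lt _ ht)
    refine step.trans ?_
    congr 1
    have hcast : Fin.cast hA.symm (Fin.cast hA (aIdx A (prt' (α := α) j) hprtA))
        = aIdx A (prt' (α := α) j) hprtA := Fin.ext (by simp)
    have hsym : π.symm ⟨((Fin.castLE (cardLe B) (aIdx B j hjB) : Fin n) : ℕ), ht⟩
        = Fin.cast hA (aIdx A (prt' (α := α) j) hprtA) := by
      rw [Equiv.symm_apply_eq]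
      apply Fin.ext
      show ((Fin.castLE (cardLe B) (aIdx B j hjB) : Fin n) : ℕ)
          = ((π (Fin.cast hA (aIdx A (prt' (α := α) j) hprtA)) : Fin r) : ℕ)
      calc ((Fin.castLE (cardLe B) (aIdx B j hjB) : Fin n) : ℕ)
          = ((aIdx B j hjB : Fin B.card) : ℕ) := by simp
        _ = ((aIdx B (prt (α := α)
              (aEl A (Fin.cast hA.symm (Fin.cast hA (aIdx A (prt' (α := α) j) hprtA)))))
              (hmemB _) : Fin B.card) : ℕ) := by
              apply aIdx_congr
              rw [hcast, aEl_aIdx]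
              exact (prt_prt' hPB h).symm
        _ = ((f (Fin.cast hA (aIdx A (prt' (α := α) j) hprtA)) : Fin r) : ℕ) := by simp [f]
        _ = ((π (Fin.cast hA (aIdx A (prt' (α := α) j) hprtA)) : Fin r) : ℕ) := by rw [hπ]
    rw [hsym, hcast, aEl_aIdx]
  have M3_inr_not : ∀ (j : Fin n), j ∉ codomSet α → m3 (Sum.inr j) = Sum.inr j := by
    intro j h
    exact Mmul_inr_inr (m := m2) (mρ_inr_not j (fun hj => h ((memB j).mp hj)))
  have ok4 : MulOK m3 (mDelta α) := by
    constructor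
    · intro i j h hne
      exfalso
      by_cases hi : i ∈ codomSet α
      · rw [M3_inr_mem i hi] at h; exact absurd h (by simp)
      · rw [M3_inr_not i hi] at h; exact hne (Sum.inr.inj h)
    · intro i j h hne
      exfalso
      by_cases hi : i ∈ codomSet α
      · rw [mDelta_inl_mem hi] at h; exact absurd h (by simp)
      · rw [mDelta_inl_not hi] at h; exact hne (Sum.inl.inj h)
  -- final pointwise identity
  have final : ∀ x, mAl α x = Mmul m3 (mDelta α) x := by
    rintro (i | i)
    · by_cases h : i ∈ domSet α
      · have h1 : m3 (Sum.inl i) = Sum.inr (prt (α := α) i) := by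
          rw [M3_inl i, dom_spec hPB h]
        have h2 : mDelta α (Sum.inl (prt (α := α) i)) = Sum.inr (prt (α := α) i) :=
          mDelta_inl_mem (prt_mem hPB h)
        rw [Mmul_inl_inr h1 h2, dom_spec hPB h]
      · obtain ⟨j, hj, _⟩ := mAl_inl_top hPB h
        rw [Mmul_inl_inl (by rw [M3_inl i, hj]), hj]
    · by_cases h : i ∈ codomSet α
      · have h1 : mDelta α (Sum.inr i) = Sum.inl i := mDelta_inr_mem h
        have h2 : m3 (Sum.inr i) = Sum.inl (prt' (α := α) i) := M3_inr_mem i h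
        rw [Mmul_inr_inl h1 h2, codom_spec hPB h]
      · obtain ⟨j, hj, _⟩ := mAl_inr_bot hPB h
        have h1 : mDelta α (Sum.inr i) = Sum.inr j := by rw [mDelta_inr_not h, hj]
        rw [Mmul_inr_inr h1, hj]
  -- assemble
  refine ⟨ofMatch (mBeta α) hmβ, ofMatch (mDelta α) hmδ, permDgm n r π,
    ⟨isPB_ofMatch _ _, ?_⟩, beta_idem hPB, ⟨isPB_ofMatch _ _, ?_⟩, delta_idem hPB,
    ⟨π, rfl⟩, ?_⟩
  · show prank _ = r
    unfold prank
    rw [domSet_beta hPB]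
    exact hrank
  · show prank _ = r
    unfold prank
    rw [domSet_delta hPB, ncard_codomSet hPB]
    exact hrank
  · have hinv1 : ∀ x, m1 (m1 x) = x := Mmul_invol hmβ (matchLam_invol A)
    have hinv2 : ∀ x, m2 (m2 x) = x := Mmul_invol hinv1 matchPerm_invol
    have hinv3 : ∀ x, m3 (m3 x) = x := Mmul_invol hinv2 hmρ
    have e1 : pmul (ofMatch (mBeta α) hmβ) (lamd A) = ofMatch m1 hinv1 := by
      rw [lamd_eq_ofMatch A]
      exact pmul_ofMatch hmβ (matchLam_invol A) ok1
    have e2 : pmul (ofMatch m1 hinv1) (permDgm n r π) = ofMatch m2 hinv2 := by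
      rw [permDgm_eq_ofMatch hrn π]
      exact pmul_ofMatch hinv1 matchPerm_invol ok2
    have e3 : pmul (ofMatch m2 hinv2) (rhod B) = ofMatch m3 hinv3 := by
      rw [show rhod B = pstar (lamd B) from rfl, lamd_eq_ofMatch B, pstar_ofMatch]
      exact pmul_ofMatch hinv2 hmρ ok3
    have e4 : pmul (ofMatch m3 hinv3) (ofMatch (mDelta α) hmδ)
        = ofMatch (Mmul m3 (mDelta α)) (Mmul_invol hinv3 hmδ) :=
      pmul_ofMatch hinv3 hmδ ok4
    rw [e1, e2, e3, e4]
    exact (eq_ofMatch hPB).trans (ofMatch_ext final)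
end
end
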